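/- arXiv:1008.2583 — 8 statements merged into one kernel-verified Lean document; each statement's English description precedes it below -/
import Mathlib

section
/- For every even integer k > 2 and every integer n > 2k, the independence number of the generalized Petersen graph satisfies α(P(n,k)) ≤ ⌊(2k−1)n/(2k)⌋. -/
namespace GP

/-- Adjacency generating relation for the generalized Petersen graph `P(n,k)`:
`Sum.inl i` is the outer vertex `u_i`, `Sum.inr i` is the inner vertex `v_i`. -/
def adjFun (n k : ℕ) : (ZMod n ⊕ ZMod n) → (ZMod n ⊕ ZMod n) → Prop
  | Sum.inl i, Sum.inl j => j = i + 1
  | Sum.inl i, Sum.inr j => j = i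
  | Sum.inr i, Sum.inr j => j = i + (k : ZMod n)
  | _, _ => False

/-- The generalized Petersen graph `P(n,k)`. -/
def P (n k : ℕ) : SimpleGraph (ZMod n ⊕ ZMod n) :=
  SimpleGraph.fromRel (adjFun n k)

/-- `s` is an independent set of vertices in `G`. -/
def IsIndep {V : Type*} (G : SimpleGraph V) (s : Finset V) : Prop :=
  ∀ v ∈ s, ∀ w ∈ s, ¬ G.Adj v w

/-- The independence number of a graph. -/
noncomputable def indepNum {V : Type*} (G : SimpleGraph V) : ℕ :=
  sSup {m | ∃ s : Finset V, IsIndep G s ∧ s.card = m}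

/-- `α(P(n,k))`. -/
noncomputable def alpha (n k : ℕ) : ℕ := indepNum (P n k)

/-- The outer vertex `u_i`. -/
def u (n : ℕ) (i : ZMod n) : ZMod n ⊕ ZMod n := Sum.inl i

/-- The inner vertex `v_i`. -/
def v (n : ℕ) (i : ZMod n) : ZMod n ⊕ ZMod n := Sum.inr i

/-- The `2k`-segment `I_t = {u_t, …, u_{t+2k-1}} ∪ {v_t, …, v_{t+2k-1}}`. -/
def segment (n k : ℕ) (t : ZMod n) : Finset (ZMod n ⊕ ZMod n) :=
  ((Finset.range (2*k)).image fun j : ℕ => u n (t + (j : ZMod n))) ∪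
  ((Finset.range (2*k)).image fun j : ℕ => v n (t + (j : ZMod n)))


set_option linter.unusedSectionVars false

open scoped Classical

section Aux

variable (Uf Vf : ℤ → Prop) (m : ℕ)

abbrev occ (i : ℤ) : Prop := Uf i ∨ Vf i

def AA (s : ℤ) : Prop := ∀ i : ℕ, 1 ≤ i → i < m → ¬ Vf (s + 2*(i:ℤ) - 1)

noncomputable def phi (e : ℤ) : ℕ :=
  if (¬ occ Uf Vf e ∧ AA Vf m (e+1)) then 1 else 0

noncomputable def cnt (a b : ℤ) : ℕ :=
  ((Finset.Ico a b).filter (fun x => ¬ occ Uf Vf x)).card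

variable {Uf Vf m}
variable (hm : 2 ≤ m)
  (hUU : ∀ i : ℤ, Uf i → Uf (i+1) → False)
  (hVV : ∀ i : ℤ, Vf i → Vf (i + 2*(m:ℤ)) → False)
  (hUV : ∀ i : ℤ, Uf i → Vf i → False)

include hm hUU hVV hUV

lemma full_pattern (a : ℤ) (h : ∀ j : ℤ, 0 ≤ j → j < 4*(m:ℤ) → occ Uf Vf (a+j)) :
    (∀ j : ℕ, j < m → Vf (a + 2*(m:ℤ) + 2*(j:ℤ))) ∧ Uf (a + (4*(m:ℤ) - 1)) := by
  have orV : ∀ j : ℤ, 0 ≤ j → j + 1 < 4*(m:ℤ) → (Vf (a+j) ∨ Vf (a+j+1)) := by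
    intro j h0 h1
    by_contra hc
    push_neg at hc
    have u1 : Uf (a+j) := (h j h0 (by omega)).resolve_right hc.1
    have u2 : Uf (a+j+1) := by
      have := (h (j+1) (by omega) (by omega)).resolve_right
        (by rw [show a + (j+1) = a + j + 1 by ring]; exact hc.2)
      rwa [show a + (j+1) = a + j + 1 by ring] at this
    exact hUU (a+j) u1 u2
  by_cases hb0 : Vf a
  · -- contradiction chain
    have C1 : ∀ i : ℕ, i ≤ m → Vf (a + 2*(i:ℤ)) := by
      intro i
      induction i with
      | zero => intro _; simpa using hb0
      | succ i ih =>
        intro hi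
        have hVi := ih (by omega)
        have h1 : ¬ Vf (a + 2*(i:ℤ) + 2*(m:ℤ)) := fun hv => hVV (a + 2*(i:ℤ)) hVi hv
        have h2 : Vf (a + (2*(m:ℤ) + 2*(i:ℤ)) + 1) := by
          refine (orV (2*(m:ℤ) + 2*(i:ℤ)) (by omega) (by omega)).resolve_left ?_
          intro hx
          exact h1 (by rwa [show a + (2*(m:ℤ) + 2*(i:ℤ)) = a + 2*(i:ℤ) + 2*(m:ℤ) by ring] at hx)
        have h3 : ¬ Vf (a + (2*(i:ℤ)+1)) := by
          intro hv
          exact hVV (a + (2*(i:ℤ)+1)) hv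
            (by rw [show a + (2*(i:ℤ)+1) + 2*(m:ℤ) = a + (2*(m:ℤ) + 2*(i:ℤ)) + 1 by ring]; exact h2)
        have h4 : Vf (a + (2*(i:ℤ)+1) + 1) :=
          (orV (2*(i:ℤ)+1) (by omega) (by omega)).resolve_left h3
        have : Vf (a + 2*((i:ℤ)+1)) := by
          rwa [show a + 2*((i:ℤ)+1) = a + (2*(i:ℤ)+1) + 1 by ring]
        rwa [show ((i+1 : ℕ):ℤ) = (i:ℤ)+1 by push_cast; ring]
      -- side conditions used omega with hi : i+1 ≤ m
    exact (hVV a hb0 (C1 m le_rfl)).elim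
  · have C2 : ∀ i : ℕ, i < m → (¬ Vf (a + 2*(i:ℤ)) ∧ Vf (a + 2*(i:ℤ) + 1)) := by
      intro i
      induction i with
      | zero =>
        intro _
        constructor
        · simpa using hb0
        · have := (orV 0 (by omega) (by omega)).resolve_left (by simpa using hb0)
          simpa using this
      | succ i ih =>
        intro hi
        obtain ⟨hn2, hv⟩ := ih (by omega)
        have g1 : ¬ Vf (a + 2*(i:ℤ) + 1 + 2*(m:ℤ)) := fun x => hVV (a + 2*(i:ℤ) + 1) hv x
        have g2 : Vf (a + (2*(m:ℤ)+2*(i:ℤ)+1) + 1) := by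
          refine (orV (2*(m:ℤ)+2*(i:ℤ)+1) (by omega) (by omega)).resolve_left ?_
          intro hx
          exact g1 (by rwa [show a + (2*(m:ℤ)+2*(i:ℤ)+1) = a + 2*(i:ℤ) + 1 + 2*(m:ℤ) by ring] at hx)
        have g3 : ¬ Vf (a + (2*(i:ℤ)+2)) := by
          intro x
          exact hVV (a + (2*(i:ℤ)+2)) x
            (by rw [show a + (2*(i:ℤ)+2) + 2*(m:ℤ) = a + (2*(m:ℤ)+2*(i:ℤ)+1) + 1 by ring]; exact g2)
        have g4 : Vf (a + (2*(i:ℤ)+2) + 1) :=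
          (orV (2*(i:ℤ)+2) (by omega) (by omega)).resolve_left g3
        constructor
        · rw [show ((i+1 : ℕ):ℤ) = (i:ℤ)+1 by push_cast; ring]
          rwa [show a + 2*((i:ℤ)+1) = a + (2*(i:ℤ)+2) by ring]
        · rw [show ((i+1 : ℕ):ℤ) = (i:ℤ)+1 by push_cast; ring]
          rwa [show a + 2*((i:ℤ)+1) + 1 = a + (2*(i:ℤ)+2) + 1 by ring]
    have b1 : Vf (a + 1) := by have := (C2 0 (by omega)).2; simpa using this
    have g5 : ¬ Vf (a + 1 + 2*(m:ℤ)) := fun x => hVV (a+1) b1 x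
    have hbk : Vf (a + 2*(m:ℤ)) := by
      refine (orV (2*(m:ℤ)) (by omega) (by omega)).resolve_right ?_
      intro hx
      exact g5 (by rwa [show a + 2*(m:ℤ) + 1 = a + 1 + 2*(m:ℤ) by ring] at hx)
    constructor
    · intro j hj
      match j, hj with
      | 0, _ => simpa using hbk
      | (i+1), hj =>
        have hv := (C2 i (by omega)).2
        have g6 : ¬ Vf (a + 2*(i:ℤ) + 1 + 2*(m:ℤ)) := fun x => hVV (a + 2*(i:ℤ) + 1) hv x
        have g7 : Vf (a + (2*(m:ℤ)+2*(i:ℤ)+1) + 1) := by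
          refine (orV (2*(m:ℤ)+2*(i:ℤ)+1) (by omega) (by omega)).resolve_left ?_
          intro hx
          exact g6 (by rwa [show a + (2*(m:ℤ)+2*(i:ℤ)+1) = a + 2*(i:ℤ) + 1 + 2*(m:ℤ) by ring] at hx)
        rw [show ((i+1 : ℕ):ℤ) = (i:ℤ)+1 by push_cast; ring]
        rwa [show a + 2*(m:ℤ) + 2*((i:ℤ)+1) = a + (2*(m:ℤ)+2*(i:ℤ)+1) + 1 by ring]
    · have hv := (C2 (m-1) (by omega)).2
      have hcast : ((m-1 : ℕ):ℤ) = (m:ℤ) - 1 := by omega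
      rw [hcast] at hv
      -- hv : Vf (a + 2*(m-1) + 1) = Vf (a + (2m-1))
      have g8 : ¬ Vf (a + 2*((m:ℤ)-1) + 1 + 2*(m:ℤ)) := fun x => hVV _ hv x
      have hocc := h (4*(m:ℤ) - 1) (by omega) (by omega)
      refine hocc.resolve_right ?_
      intro hx
      exact g8 (by rwa [show a + 2*((m:ℤ)-1) + 1 + 2*(m:ℤ) = a + (4*(m:ℤ)-1) by ring])


lemma full_notocc (a : ℤ) (h : ∀ j : ℤ, 0 ≤ j → j < 4*(m:ℤ) → occ Uf Vf (a+j)) :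
    ¬ occ Uf Vf (a + 4*(m:ℤ)) := by
  obtain ⟨hVj, hu⟩ := full_pattern hm hUU hVV hUV a h
  rintro (hU | hV)
  · exact hUU (a + (4*(m:ℤ) - 1)) hu (by rwa [show a + (4*(m:ℤ)-1) + 1 = a + 4*(m:ℤ) by ring])
  · have h0 : Vf (a + 2*(m:ℤ)) := by simpa using hVj 0 (by omega)
    exact hVV (a + 2*(m:ℤ)) h0 (by rwa [show a + 2*(m:ℤ) + 2*(m:ℤ) = a + 4*(m:ℤ) by ring])

lemma full_A (a : ℤ) (h : ∀ j : ℤ, 0 ≤ j → j < 4*(m:ℤ) → occ Uf Vf (a+j)) :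
    AA Vf m (a + 4*(m:ℤ) + 1) := by
  obtain ⟨hVj, _⟩ := full_pattern hm hUU hVV hUV a h
  intro i h1 hi hv
  exact hVV (a + 2*(m:ℤ) + 2*(i:ℤ)) (hVj i hi)
    (by rwa [show a + 2*(m:ℤ) + 2*(i:ℤ) + 2*(m:ℤ) = a + 4*(m:ℤ) + 1 + 2*(i:ℤ) - 1 by ring])

lemma A_forced (s : ℤ) (hA : AA Vf m s)
    (h : ∀ j : ℤ, 0 ≤ j → j < 4*(m:ℤ) - 1 → occ Uf Vf (s+j)) :
    ∀ j : ℕ, j < m → Uf (s + 2*(m:ℤ) + 2*(j:ℤ)) := by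
  have hUodd : ∀ i : ℕ, 1 ≤ i → i < m → Uf (s + 2*(i:ℤ) - 1) := by
    intro i h1 h2
    have := (h (2*(i:ℤ) - 1) (by omega) (by omega)).resolve_right
      (by rw [show s + (2*(i:ℤ)-1) = s + 2*(i:ℤ) - 1 by ring]; exact hA i h1 h2)
    rwa [show s + (2*(i:ℤ)-1) = s + 2*(i:ℤ) - 1 by ring] at this
  have E1 : ∀ j : ℕ, j < m → Vf (s + 2*(j:ℤ)) := by
    intro j hj
    by_cases hc : j + 1 < m
    · have hU := hUodd (j+1) (by omega) hc
      have hU' : Uf (s + 2*(j:ℤ) + 1) := by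
        rwa [show ((j+1:ℕ):ℤ) = (j:ℤ)+1 by push_cast; ring, show s + 2*((j:ℤ)+1) - 1 = s + 2*(j:ℤ) + 1 by ring] at hU
      have hnU : ¬ Uf (s + 2*(j:ℤ)) := fun x => hUU (s + 2*(j:ℤ)) x hU'
      exact (h (2*(j:ℤ)) (by omega) (by omega)).resolve_left hnU
    · have hjm : j = m - 1 := by omega
      have hU := hUodd (m-1) (by omega) (by omega)
      have hU' : Uf (s + 2*((m:ℤ)-1) - 1) := by
        rwa [show ((m-1:ℕ):ℤ) = (m:ℤ)-1 by omega] at hU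
      have hnU : ¬ Uf (s + 2*(j:ℤ)) := by
        intro x
        refine hUU (s + 2*((m:ℤ)-1) - 1) hU' ?_
        rw [show s + 2*((m:ℤ)-1) - 1 + 1 = s + 2*((m:ℤ)-1) by ring]
        rwa [show (j:ℤ) = (m:ℤ)-1 by omega] at x
      -- hU' : Uf (s+2m-3); we need ¬ Uf (s+2m-2) : (s+2m-3)+1 = s+2m-2 ✓
      exact (h (2*(j:ℤ)) (by omega) (by omega)).resolve_left hnU
  intro j hj
  have hv := E1 j hj
  have hnV : ¬ Vf (s + 2*(m:ℤ) + 2*(j:ℤ)) := by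
    intro x
    exact hVV (s + 2*(j:ℤ)) hv (by rwa [show s + 2*(j:ℤ) + 2*(m:ℤ) = s + 2*(m:ℤ) + 2*(j:ℤ) by ring])
  have := (h (2*(m:ℤ) + 2*(j:ℤ)) (by omega) (by omega)).resolve_right
    (by rwa [show s + (2*(m:ℤ)+2*(j:ℤ)) = s + 2*(m:ℤ) + 2*(j:ℤ) by ring])
  rwa [show s + (2*(m:ℤ)+2*(j:ℤ)) = s + 2*(m:ℤ) + 2*(j:ℤ) by ring] at this

lemma A_run_lt (s : ℤ) (hA : AA Vf m s)
    (h : ∀ j : ℤ, 0 ≤ j → j < 4*(m:ℤ) → occ Uf Vf (s+j)) : False := by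
  have E2 := A_forced hm hUU hVV hUV s hA (fun j h0 h1 => h j h0 (by omega))
  have hU0 : Uf (s + 2*(m:ℤ)) := by simpa using E2 0 (by omega)
  have v1 : Vf (s + 2*(m:ℤ) - 1) := by
    have hnU : ¬ Uf (s + 2*(m:ℤ) - 1) := by
      intro x
      exact hUU (s + 2*(m:ℤ) - 1) x (by rwa [show s + 2*(m:ℤ) - 1 + 1 = s + 2*(m:ℤ) by ring])
    have := (h (2*(m:ℤ)-1) (by omega) (by omega)).resolve_left
      (by rwa [show s + (2*(m:ℤ)-1) = s + 2*(m:ℤ) - 1 by ring])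
    rwa [show s + (2*(m:ℤ)-1) = s + 2*(m:ℤ) - 1 by ring] at this
  have hU1 : Uf (s + 4*(m:ℤ) - 2) := by
    have := E2 (m-1) (by omega)
    rwa [show ((m-1:ℕ):ℤ) = (m:ℤ)-1 by omega, show s + 2*(m:ℤ) + 2*((m:ℤ)-1) = s + 4*(m:ℤ) - 2 by ring] at this
  have v2 : Vf (s + 4*(m:ℤ) - 1) := by
    have hnU : ¬ Uf (s + 4*(m:ℤ) - 1) := by
      intro x
      exact hUU (s + 4*(m:ℤ) - 2) hU1 (by rwa [show s + 4*(m:ℤ) - 2 + 1 = s + 4*(m:ℤ) - 1 by ring])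
    have := (h (4*(m:ℤ)-1) (by omega) (by omega)).resolve_left
      (by rwa [show s + (4*(m:ℤ)-1) = s + 4*(m:ℤ) - 1 by ring])
    rwa [show s + (4*(m:ℤ)-1) = s + 4*(m:ℤ) - 1 by ring] at this
  exact hVV (s + 2*(m:ℤ) - 1) v1 (by rwa [show s + 2*(m:ℤ) - 1 + 2*(m:ℤ) = s + 4*(m:ℤ) - 1 by ring])

lemma A_prop (s : ℤ) (hA : AA Vf m s)
    (h : ∀ j : ℤ, 0 ≤ j → j < 4*(m:ℤ) - 1 → occ Uf Vf (s+j)) :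
    AA Vf m (s + 4*(m:ℤ)) := by
  have E2 := A_forced hm hUU hVV hUV s hA h
  have E3 : ∀ i : ℕ, 1 ≤ i → i < m → Vf (s + 2*(m:ℤ) + 2*(i:ℤ) - 1) := by
    intro i h1 h2
    have hU := E2 (i-1) (by omega)
    have hU' : Uf (s + 2*(m:ℤ) + 2*((i:ℤ)-1)) := by
      rwa [show ((i-1:ℕ):ℤ) = (i:ℤ)-1 by omega] at hU
    have hnU : ¬ Uf (s + 2*(m:ℤ) + 2*(i:ℤ) - 1) := by
      intro x
      exact hUU (s + 2*(m:ℤ) + 2*((i:ℤ)-1)) hU'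
        (by rwa [show s + 2*(m:ℤ) + 2*((i:ℤ)-1) + 1 = s + 2*(m:ℤ) + 2*(i:ℤ) - 1 by ring])
    have := (h (2*(m:ℤ) + 2*(i:ℤ) - 1) (by omega) (by omega)).resolve_left
      (by rwa [show s + (2*(m:ℤ)+2*(i:ℤ)-1) = s + 2*(m:ℤ) + 2*(i:ℤ) - 1 by ring])
    rwa [show s + (2*(m:ℤ)+2*(i:ℤ)-1) = s + 2*(m:ℤ) + 2*(i:ℤ) - 1 by ring] at this
  intro i h1 h2 hv
  exact hVV (s + 2*(m:ℤ) + 2*(i:ℤ) - 1) (E3 i h1 h2)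
    (by rwa [show s + 2*(m:ℤ) + 2*(i:ℤ) - 1 + 2*(m:ℤ) = s + 4*(m:ℤ) + 2*(i:ℤ) - 1 by ring])


lemma phi_le_one (e : ℤ) : phi Uf Vf m e ≤ 1 := by
  unfold phi; split <;> omega

lemma step_lemma (e e' : ℤ) (he : ¬ occ Uf Vf e) (he' : ¬ occ Uf Vf e') (hlt : e < e')
    (hb : ∀ x : ℤ, e < x → x < e' → occ Uf Vf x) :
    e' - e + (phi Uf Vf m e : ℤ) ≤ 4*(m:ℤ) + (phi Uf Vf m e' : ℤ) := by
  have hphinn : (0:ℤ) ≤ (phi Uf Vf m e' : ℤ) := Int.natCast_nonneg _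
  by_cases hA : AA Vf m (e+1)
  · have hpe : phi Uf Vf m e = 1 := if_pos ⟨he, hA⟩
    have hle : e' ≤ e + 4*(m:ℤ) := by
      by_contra hc
      push_neg at hc
      exact A_run_lt hm hUU hVV hUV (e+1) hA
        (fun j h0 h4 => by
          have := hb (e+1+j) (by omega) (by omega)
          rwa [show e+1+j = e + 1 + j by ring] at this)
    rcases eq_or_lt_of_le hle with heq | hlt2
    · have hA2 : AA Vf m (e+1+4*(m:ℤ)) := A_prop hm hUU hVV hUV (e+1) hA
        (fun j h0 hj => hb (e+1+j) (by omega) (by omega))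
      have hpe' : phi Uf Vf m e' = 1 := by
        refine if_pos ⟨he', ?_⟩
        rwa [heq, show e + 4*(m:ℤ) + 1 = e+1+4*(m:ℤ) by ring]
      rw [hpe, hpe']
      omega
    · rw [hpe]
      omega
  · have hpe : phi Uf Vf m e = 0 := if_neg (by tauto)
    have hle : e' ≤ e + 4*(m:ℤ) + 1 := by
      by_contra hc
      push_neg at hc
      have hocc : ∀ j : ℤ, 0 ≤ j → j < 4*(m:ℤ) → occ Uf Vf (e+1+j) :=
        fun j h0 h4 => hb (e+1+j) (by omega) (by omega)
      have hno := full_notocc hm hUU hVV hUV (e+1) hocc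
      exact hno (hb (e+1+4*(m:ℤ)) (by omega) (by omega))
    rcases eq_or_lt_of_le hle with heq | hlt2
    · have hA' : AA Vf m (e+1+4*(m:ℤ)+1) := full_A hm hUU hVV hUV (e+1)
        (fun j h0 h4 => hb (e+1+j) (by omega) (by omega))
      have hpe' : phi Uf Vf m e' = 1 := by
        refine if_pos ⟨he', ?_⟩
        rwa [heq, show e + 4*(m:ℤ) + 1 + 1 = e+1+4*(m:ℤ)+1 by ring]
      rw [hpe, hpe']
      omega
    · rw [hpe]
      omega

lemma walk (M : ℕ) : ∀ e : ℤ, 1 ≤ M → ¬ occ Uf Vf e → ¬ occ Uf Vf (e + (M:ℤ)) →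
    (M : ℤ) + (phi Uf Vf m e : ℤ) ≤
      4*(m:ℤ) * (cnt Uf Vf (e+1) (e+1+(M:ℤ)) : ℤ) + (phi Uf Vf m (e + (M:ℤ)) : ℤ) := by
  induction M using Nat.strong_induction_on with
  | _ M ih =>
  intro e hM he heM
  have hex : ∃ j : ℕ, ¬ occ Uf Vf (e + 1 + (j:ℤ)) := by
    refine ⟨M - 1, ?_⟩
    have hc : e + 1 + ((M-1:ℕ):ℤ) = e + (M:ℤ) := by
      have : ((M-1:ℕ):ℤ) = (M:ℤ) - 1 := by omega
      rw [this]; ring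
    rwa [hc]
  set d := Nat.find hex with hdd
  have hd : ¬ occ Uf Vf (e + 1 + (d:ℤ)) := Nat.find_spec hex
  have hmin : ∀ j : ℕ, j < d → occ Uf Vf (e+1+(j:ℤ)) := by
    intro j hj
    have := Nat.find_min hex hj
    by_contra hcon
    exact this hcon
  have hdM : d ≤ M - 1 := by
    apply Nat.find_min'
    have hc : e + 1 + ((M-1:ℕ):ℤ) = e + (M:ℤ) := by
      have : ((M-1:ℕ):ℤ) = (M:ℤ) - 1 := by omega
      rw [this]; ring
    rwa [hc]
  have hbet : ∀ x : ℤ, e < x → x < e + 1 + (d:ℤ) → occ Uf Vf x := by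
    intro x hx1 hx2
    obtain ⟨j, hj1, hj2⟩ : ∃ j : ℕ, (j:ℤ) = x - e - 1 ∧ j < d := ⟨(x-e-1).toNat, by omega, by omega⟩
    have := hmin j hj2
    rwa [show e+1+(j:ℤ) = x by omega] at this
  have hstep := step_lemma hm hUU hVV hUV e (e+1+(d:ℤ)) he hd (by omega) hbet
  by_cases hcase : d = M - 1
  · have hfeM : e + 1 + (d:ℤ) = e + (M:ℤ) := by omega
    rw [hfeM] at hstep
    have hmem : e + (M:ℤ) ∈ (Finset.Ico (e+1) (e+1+(M:ℤ))).filter (fun x => ¬ occ Uf Vf x) := by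
      refine Finset.mem_filter.mpr ⟨Finset.mem_Ico.mpr ⟨by omega, by omega⟩, heM⟩
    have h1 : 1 ≤ cnt Uf Vf (e+1) (e+1+(M:ℤ)) := by
      have := Finset.card_pos.mpr ⟨_, hmem⟩
      exact this
    have h4m : (4*(m:ℤ)) * 1 ≤ 4*(m:ℤ) * (cnt Uf Vf (e+1) (e+1+(M:ℤ)) : ℤ) := by
      apply mul_le_mul_of_nonneg_left _ (by positivity)
      exact_mod_cast h1
    linarith [hstep, h4m]
  · have hdlt : d < M - 1 := by omega
    set f := e + 1 + (d:ℤ) with hf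
    have hfM : f + ((M-1-d:ℕ):ℤ) = e + (M:ℤ) := by rw [hf]; omega
    have hIH := ih (M - 1 - d) (by omega) f (by omega) hd (by rwa [hfM])
    rw [hfM] at hIH
    -- count split: 1 + cnt (f+1) (e+1+M) ≤ cnt (e+1) (e+1+M)
    have hsub : 1 + cnt Uf Vf (f+1) (e+1+(M:ℤ)) ≤ cnt Uf Vf (e+1) (e+1+(M:ℤ)) := by
      have hss : insert f ((Finset.Ico (f+1) (e+1+(M:ℤ))).filter (fun x => ¬ occ Uf Vf x))
          ⊆ (Finset.Ico (e+1) (e+1+(M:ℤ))).filter (fun x => ¬ occ Uf Vf x) := by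
        intro x hx
        rcases Finset.mem_insert.mp hx with rfl | hx
        · refine Finset.mem_filter.mpr ⟨Finset.mem_Ico.mpr ⟨by omega, by omega⟩, hd⟩
        · obtain ⟨hx1, hx2⟩ := Finset.mem_filter.mp hx
          obtain ⟨ha, hb2⟩ := Finset.mem_Ico.mp hx1
          exact Finset.mem_filter.mpr ⟨Finset.mem_Ico.mpr ⟨by omega, hb2⟩, hx2⟩
      have hnotmem : f ∉ (Finset.Ico (f+1) (e+1+(M:ℤ))).filter (fun x => ¬ occ Uf Vf x) := by
        intro hx
        have := (Finset.mem_Ico.mp (Finset.mem_filter.mp hx).1).1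
        omega
      have := Finset.card_le_card hss
      rwa [Finset.card_insert_of_notMem hnotmem, add_comm] at this
    have hsubz : 1 + (cnt Uf Vf (f+1) (e+1+(M:ℤ)) : ℤ) ≤ (cnt Uf Vf (e+1) (e+1+(M:ℤ)) : ℤ) := by
      exact_mod_cast hsub
    have hf1 : f + 1 + ((M-1-d:ℕ):ℤ) = e + 1 + (M:ℤ) := by rw [hf]; omega
    rw [hf1] at hIH
    have hMd : ((M-1-d:ℕ):ℤ) = (M:ℤ) - 1 - (d:ℤ) := by omega
    rw [hMd] at hIH
    have hm0 : (0:ℤ) ≤ (m:ℤ) := by positivity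
    nlinarith [hstep, hIH, hsubz, hm0]


lemma count_lower (nn : ℕ) (hnn : 4*m < nn)
    (hUp : ∀ i : ℤ, Uf (i + (nn:ℤ)) ↔ Uf i) (hVp : ∀ i : ℤ, Vf (i + (nn:ℤ)) ↔ Vf i) :
    ∃ e : ℤ, ¬ occ Uf Vf e ∧ (nn : ℤ) ≤ 4*(m:ℤ) * (cnt Uf Vf (e+1) (e+1+(nn:ℤ)) : ℤ) := by
  by_cases hall : ∀ i : ℤ, occ Uf Vf i
  · exact ((full_notocc hm hUU hVV hUV 0 (fun j _ _ => hall _)) (hall _)).elim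
  · push_neg at hall
    obtain ⟨e, he⟩ := hall
    have he : ¬ occ Uf Vf e := fun h => h.elim he.1 he.2
    have hocc_p : ∀ i : ℤ, occ Uf Vf (i + (nn:ℤ)) ↔ occ Uf Vf i :=
      fun i => or_congr (hUp i) (hVp i)
    have heM : ¬ occ Uf Vf (e + (nn:ℤ)) := by rw [hocc_p]; exact he
    have hw := walk hm hUU hVV hUV nn e (by omega) he heM
    have hAAp : AA Vf m (e + (nn:ℤ) + 1) ↔ AA Vf m (e + 1) := by
      constructor <;> intro hA i h1 h2 <;> intro hv
      · refine hA i h1 h2 ?_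
        rw [show e + (nn:ℤ) + 1 + 2*(i:ℤ) - 1 = (e + 1 + 2*(i:ℤ) - 1) + (nn:ℤ) by ring, hVp]
        exact hv
      · refine hA i h1 h2 ?_
        rw [show e + (nn:ℤ) + 1 + 2*(i:ℤ) - 1 = (e + 1 + 2*(i:ℤ) - 1) + (nn:ℤ) by ring, hVp] at hv
        exact hv
    have hphi : phi Uf Vf m (e + (nn:ℤ)) = phi Uf Vf m e := by
      unfold phi
      congr 1
      · simp only [eq_iff_iff]
        exact and_congr (not_congr (hocc_p e)) hAAp
    rw [hphi] at hw
    exact ⟨e, he, by linarith⟩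

end Aux

theorem alpha_upper_bound_aux (n k : ℕ) (hke : Even k) (hk : 2 < k) (hn : 2 * k < n)
    (s : Finset (ZMod n ⊕ ZMod n)) (hs : IsIndep (P n k) s) :
    s.card * (2 * k) ≤ (2 * k - 1) * n := by
  obtain ⟨m, hkm⟩ := hke
  have hm : 2 ≤ m := by omega
  haveI : NeZero n := ⟨by omega⟩
  haveI : Fact (1 < n) := ⟨by omega⟩
  -- ZMod-level independence facts
  have hUUz : ∀ z : ZMod n, Sum.inl z ∈ s → Sum.inl (z+1) ∈ s → False := by
    intro z h1 h2
    refine hs _ h1 _ h2 ?_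
    rw [P, SimpleGraph.fromRel_adj]
    refine ⟨?_, Or.inl ?_⟩
    · intro hcon
      have hz : z = z + 1 := Sum.inl.inj hcon
      exact one_ne_zero (left_eq_add.mp hz)
    · show adjFun n k (Sum.inl z) (Sum.inl (z+1))
      simp [adjFun]
  have hVVz : ∀ z : ZMod n, Sum.inr z ∈ s → Sum.inr (z + (k : ZMod n)) ∈ s → False := by
    intro z h1 h2
    refine hs _ h1 _ h2 ?_
    rw [P, SimpleGraph.fromRel_adj]
    refine ⟨?_, Or.inl ?_⟩
    · intro hcon
      have hz : z = z + (k : ZMod n) := Sum.inr.inj hcon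
      have hk0 : (k : ZMod n) = 0 := left_eq_add.mp hz
      have hdvd : n ∣ k := (ZMod.natCast_eq_zero_iff k n).mp hk0
      have := Nat.le_of_dvd (by omega) hdvd
      omega
    · show adjFun n k (Sum.inr z) (Sum.inr (z + (k : ZMod n)))
      simp [adjFun]
  have hUVz : ∀ z : ZMod n, Sum.inl z ∈ s → Sum.inr z ∈ s → False := by
    intro z h1 h2
    refine hs _ h1 _ h2 ?_
    rw [P, SimpleGraph.fromRel_adj]
    exact ⟨by simp, Or.inl (by simp [adjFun])⟩
  -- ℤ-level
  have hUU : ∀ i : ℤ, (Sum.inl ((i : ZMod n)) ∈ s) → (Sum.inl (((i+1 : ℤ) : ZMod n)) ∈ s) → False := by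
    intro i h1 h2
    refine hUUz (i : ZMod n) h1 ?_
    rwa [show ((i+1 : ℤ) : ZMod n) = (i : ZMod n) + 1 by push_cast; ring] at h2
  have hVV : ∀ i : ℤ, (Sum.inr ((i : ZMod n)) ∈ s) → (Sum.inr (((i + 2*(m:ℤ) : ℤ) : ZMod n)) ∈ s) → False := by
    intro i h1 h2
    refine hVVz (i : ZMod n) h1 ?_
    rwa [show ((i + 2*(m:ℤ) : ℤ) : ZMod n) = (i : ZMod n) + (k : ZMod n) by
      rw [hkm]; push_cast; ring] at h2
  have hUV : ∀ i : ℤ, (Sum.inl ((i : ZMod n)) ∈ s) → (Sum.inr ((i : ZMod n)) ∈ s) → False :=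
    fun i h1 h2 => hUVz _ h1 h2
  have hcastp : ∀ i : ℤ, ((i + (n:ℤ) : ℤ) : ZMod n) = (i : ZMod n) := by
    intro i; push_cast; simp
  have hUp : ∀ i : ℤ, (Sum.inl (((i + (n:ℤ) : ℤ) : ZMod n)) ∈ s) ↔ (Sum.inl ((i : ZMod n)) ∈ s) := by
    intro i; rw [hcastp]
  have hVp : ∀ i : ℤ, (Sum.inr (((i + (n:ℤ) : ℤ) : ZMod n)) ∈ s) ↔ (Sum.inr ((i : ZMod n)) ∈ s) := by
    intro i; rw [hcastp]
  obtain ⟨e, he, hcnt⟩ := count_lower (Uf := fun i : ℤ => Sum.inl ((i : ZMod n)) ∈ s)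
    (Vf := fun i : ℤ => Sum.inr ((i : ZMod n)) ∈ s) hm hUU hVV hUV n (by omega) hUp hVp
  -- transfer the count to ZMod n
  set O : Finset (ZMod n) := Finset.univ.filter (fun z => Sum.inl z ∈ s ∨ Sum.inr z ∈ s) with hO
  set E : Finset (ZMod n) := Finset.univ \ O with hE
  have hmemO : ∀ z : ZMod n, z ∈ O ↔ (Sum.inl z ∈ s ∨ Sum.inr z ∈ s) := by
    intro z; rw [hO]; simp
  have hmemE : ∀ z : ZMod n, z ∈ E ↔ ¬ (Sum.inl z ∈ s ∨ Sum.inr z ∈ s) := by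
    intro z; rw [hE, Finset.mem_sdiff]; simp [hmemO z]
  have hcard : cnt (fun i : ℤ => Sum.inl ((i : ZMod n)) ∈ s)
      (fun i : ℤ => Sum.inr ((i : ZMod n)) ∈ s) (e+1) (e+1+(n:ℤ)) = E.card := by
    unfold cnt
    apply Finset.card_bij (fun x _ => ((x : ℤ) : ZMod n))
    · intro a ha
      simp only [Finset.mem_filter] at ha
      exact (hmemE _).mpr ha.2
    · intro a1 ha1 a2 ha2 heq
      simp only [Finset.mem_filter, Finset.mem_Ico] at ha1 ha2
      obtain ⟨⟨hb1, hb2⟩, -⟩ := ha1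
      obtain ⟨⟨hb3, hb4⟩, -⟩ := ha2
      have hz2 : ((a1 - a2 : ℤ) : ZMod n) = 0 := by push_cast; rw [heq]; ring
      have hdvd : ((n:ℕ):ℤ) ∣ (a1 - a2) := (ZMod.intCast_zmod_eq_zero_iff_dvd _ n).mp hz2
      have h0 : a1 - a2 = 0 := Int.eq_zero_of_dvd_of_natAbs_lt_natAbs hdvd (by omega)
      omega
    · intro z hz
      obtain ⟨w, hw⟩ : ∃ w : ℤ, ((w : ℤ) : ZMod n) = z := by
        refine ⟨(z.val : ℤ), ?_⟩
        push_cast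
        simp [ZMod.natCast_val, ZMod.cast_id]
      have hn0 : (0:ℤ) < (n:ℤ) := by exact_mod_cast (by omega : 0 < n)
      set a : ℤ := e + 1 + (w - (e+1)) % (n:ℤ) with ha
      have hmod1 : 0 ≤ (w - (e+1)) % (n:ℤ) := Int.emod_nonneg _ (by omega)
      have hmod2 : (w - (e+1)) % (n:ℤ) < (n:ℤ) := Int.emod_lt_of_pos _ hn0
      have hcast : ((a : ℤ) : ZMod n) = z := by
        rw [ha]
        calc ((e + 1 + (w - (e+1)) % (n:ℤ) : ℤ) : ZMod n)
            = ((e+1 : ℤ) : ZMod n) + (((w - (e+1)) % (n:ℤ) : ℤ) : ZMod n) := by push_cast; ring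
          _ = ((e+1 : ℤ) : ZMod n) + ((w - (e+1) : ℤ) : ZMod n) := by rw [ZMod.intCast_mod]
          _ = ((w : ℤ) : ZMod n) := by push_cast; ring
          _ = z := hw
      refine ⟨a, ?_, hcast⟩
      simp only [Finset.mem_filter, Finset.mem_Ico]
      refine ⟨⟨by omega, by omega⟩, ?_⟩
      intro hocc
      have hocc' : Sum.inl ((a : ℤ) : ZMod n) ∈ s ∨ Sum.inr ((a : ℤ) : ZMod n) ∈ s := hocc
      rw [hcast] at hocc'
      exact (hmemE z).mp hz hocc'
  -- |s| ≤ |O|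
  have hsO : s.card ≤ O.card := by
    apply Finset.card_le_card_of_injOn (Sum.elim id id)
    · intro x hx
      rcases x with z | z
      · exact (hmemO z).mpr (Or.inl hx)
      · exact (hmemO z).mpr (Or.inr hx)
    · intro x hx y hy hxy
      rcases x with z1 | z1 <;> rcases y with z2 | z2 <;>
        simp only [Sum.elim_inl, Sum.elim_inr, id] at hxy
      · exact congrArg Sum.inl hxy
      · exact ((hUVz z1 (Finset.mem_coe.mp hx) (by rw [← hxy] at hy; exact Finset.mem_coe.mp hy)).elim)
      · exact ((hUVz z2 (Finset.mem_coe.mp hy) (by rw [hxy] at hx; exact Finset.mem_coe.mp hx)).elim)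
      · exact congrArg Sum.inr hxy
  have hOle : O.card ≤ n := by
    have := Finset.card_le_card (Finset.subset_univ O)
    rwa [Finset.card_univ, ZMod.card] at this
  have hON : O.card + E.card = n := by
    rw [hE, Finset.card_sdiff_of_subset (Finset.subset_univ O), Finset.card_univ, ZMod.card]
    omega
  -- final arithmetic
  have hnE : (n:ℤ) ≤ 4*(m:ℤ) * (E.card : ℤ) := by rw [hcard] at hcnt; exact_mod_cast hcnt
  have h1 : (s.card : ℤ) ≤ (n:ℤ) - (E.card : ℤ) := by
    have h3 : (O.card : ℤ) + (E.card : ℤ) = (n:ℤ) := by exact_mod_cast hON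
    have h2 : (s.card : ℤ) ≤ (O.card : ℤ) := by exact_mod_cast hsO
    linarith
  have hkz : (k:ℤ) = 2*(m:ℤ) := by omega
  have hgoal : (s.card : ℤ) * (2*(k:ℤ)) ≤ (2*(k:ℤ) - 1) * (n:ℤ) := by
    rw [hkz]
    have hmul := mul_le_mul_of_nonneg_right h1 (show (0:ℤ) ≤ 4*(m:ℤ) by positivity)
    nlinarith [hnE]
  have hk1 : (1:ℕ) ≤ 2*k := by omega
  zify [hk1]
  exact hgoal

/-- For every even `k > 2` and every `n > 2k`,
`α(P(n,k)) ≤ ⌊(2k−1)n/(2k)⌋`. -/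
theorem alpha_upper_bound (n k : ℕ) (hke : Even k) (hk : 2 < k) (hn : 2 * k < n) :
    alpha n k ≤ (2 * k - 1) * n / (2 * k) := by
  simp only [alpha, indepNum]
  apply csSup_le'
  rintro x ⟨s, hs, rfl⟩
  rw [Nat.le_div_iff_mul_le (by omega : 0 < 2*k)]
  exact alpha_upper_bound_aux n k hke hk hn s hs

end GP
end

section
/- Let k ≥ 2 be an even integer and n ≥ 3k an integer. For every index t, the subgraph of P(n,k) induced by the 2k-segment I_t has independence number exactly 2k. -/
namespace GP

section Aux
variable {n k : ℕ}

lemma castInj {a b : ℕ} (ha : a < n) (hb : b < n) (h : (a : ZMod n) = b) : a = b := by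
  have h2 := (ZMod.natCast_eq_natCast_iff a b n).mp h
  rwa [Nat.ModEq, Nat.mod_eq_of_lt ha, Nat.mod_eq_of_lt hb] at h2

lemma shiftInj {a b : ℕ} (ha : a < n) (hb : b < n) {t : ZMod n}
    (h : t + (a : ZMod n) = t + (b : ZMod n)) : a = b :=
  castInj ha hb (add_left_cancel h)

lemma adjFun_ll {i j : ZMod n} : adjFun n k (Sum.inl i) (Sum.inl j) ↔ j = i + 1 := Iff.rfl
lemma adjFun_lr {i j : ZMod n} : adjFun n k (Sum.inl i) (Sum.inr j) ↔ j = i := Iff.rfl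
lemma adjFun_rr {i j : ZMod n} : adjFun n k (Sum.inr i) (Sum.inr j) ↔ j = i + (k : ZMod n) := Iff.rfl
lemma adjFun_rl {i j : ZMod n} : adjFun n k (Sum.inr i) (Sum.inl j) ↔ False := Iff.rfl

lemma div2k {j : ℕ} (hk : 0 < k) (hj : j < 2*k) : j / k = if j < k then 0 else 1 := by
  split_ifs with h
  · exact Nat.div_eq_of_lt h
  · push_neg at h
    obtain ⟨r, rfl⟩ := Nat.exists_eq_add_of_le h
    rw [Nat.add_comm, Nat.add_div_right _ hk, Nat.div_eq_of_lt (by omega)]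

lemma contraA (hke : Even k) (hk : 2 ≤ k) {j : ℕ} (hj : j + 1 < 2*k)
    (h1 : j % 2 = j / k) (h2 : (j+1) % 2 = (j+1)/k) : False := by
  obtain ⟨m, hm⟩ := hke
  rw [div2k (by omega) (by omega)] at h1
  rw [div2k (by omega) hj] at h2
  split_ifs at h1 h2 <;> omega

lemma contraB (hke : Even k) (hk : 2 ≤ k) {j : ℕ} (hj : j + k < 2*k)
    (h1 : ¬ j % 2 = j / k) (h2 : ¬ (j+k) % 2 = (j+k)/k) : False := by
  obtain ⟨m, hm⟩ := hke
  rw [div2k (by omega) (by omega)] at h1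
  rw [div2k (by omega) hj] at h2
  split_ifs at h1 h2 <;> omega

/-- The witness vertex for index `j`. -/
def w (n k : ℕ) (t : ZMod n) (j : ℕ) : ZMod n ⊕ ZMod n :=
  if j % 2 = j / k then Sum.inl (t + (j : ZMod n)) else Sum.inr (t + (j : ZMod n))

/-- The witness independent set. -/
def W (n k : ℕ) (t : ZMod n) : Finset (ZMod n ⊕ ZMod n) :=
  (Finset.range (2*k)).image (w n k t)

end Aux

/-- For even `k ≥ 2` and `n ≥ 3k`, the subgraph of `P(n,k)` induced by
the `2k`-segment `I_t` has independence number exactly `2k`. -/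
theorem segment_induced_indepNum (n k : ℕ) (hke : Even k) (hk : 2 ≤ k) (hn : 3 * k ≤ n)
    (t : ZMod n) :
    indepNum (SimpleGraph.induce (↑(segment n k t) : Set (ZMod n ⊕ ZMod n)) (P n k)) = 2 * k := by
  classical
  have h2k : 2 * k < n := by omega
  -- ambient independence of W
  have hWind : ∀ x ∈ W n k t, ∀ y ∈ W n k t, ¬ (P n k).Adj x y := by
    intro x hx y hy hadj
    obtain ⟨j1, hj1, rfl⟩ := Finset.mem_image.mp hx
    obtain ⟨j2, hj2, rfl⟩ := Finset.mem_image.mp hy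
    rw [Finset.mem_range] at hj1 hj2
    rw [P, SimpleGraph.fromRel_adj] at hadj
    obtain ⟨hne, hrel⟩ := hadj
    by_cases c1 : j1 % 2 = j1 / k <;> by_cases c2 : j2 % 2 = j2 / k <;>
        simp only [w, if_pos, if_neg, c1, c2, if_true, if_false, ite_true, ite_false,
          adjFun_ll, adjFun_lr, adjFun_rr, adjFun_rl, or_false, false_or] at hrel hne
    · -- both outer
      rcases hrel with h | h
      · have e : j2 = j1 + 1 := shiftInj (n := n) (a := j2) (b := j1 + 1) (by omega) (by omega)
          (by push_cast; rw [← add_assoc]; exact h)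
        have hlt : j1 + 1 < 2*k := by omega
        exact contraA hke hk hlt c1 (e ▸ c2)
      · have e : j1 = j2 + 1 := shiftInj (n := n) (a := j1) (b := j2 + 1) (by omega) (by omega)
          (by push_cast; rw [← add_assoc]; exact h)
        have hlt : j2 + 1 < 2*k := by omega
        exact contraA hke hk hlt c2 (e ▸ c1)
    · -- outer, inner
      have e : j2 = j1 := shiftInj (n := n) (a := j2) (b := j1) (by omega) (by omega) hrel
      exact c2 (e ▸ c1)
    · -- inner, outer
      have e : j1 = j2 := shiftInj (n := n) (a := j1) (b := j2) (by omega) (by omega) hrel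
      exact c1 (e ▸ c2)
    · -- both inner
      rcases hrel with h | h
      · have e : j2 = j1 + k := shiftInj (n := n) (a := j2) (b := j1 + k) (by omega) (by omega)
          (by push_cast; rw [← add_assoc]; exact h)
        have hlt : j1 + k < 2*k := by omega
        exact contraB hke hk hlt c1 (e ▸ c2)
      · have e : j1 = j2 + k := shiftInj (n := n) (a := j1) (b := j2 + k) (by omega) (by omega)
          (by push_cast; rw [← add_assoc]; exact h)
        have hlt : j2 + k < 2*k := by omega
        exact contraB hke hk hlt c2 (e ▸ c1)
  have hWcard : (W n k t).card = 2 * k := by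
    rw [W, Finset.card_image_of_injOn, Finset.card_range]
    intro j1 h1 j2 h2 heq
    rw [Finset.mem_coe, Finset.mem_range] at h1 h2
    by_cases c1 : j1 % 2 = j1 / k <;> by_cases c2 : j2 % 2 = j2 / k <;>
        simp only [w, c1, c2, if_true, if_false, ite_true, ite_false,
          Sum.inl.injEq, Sum.inr.injEq, reduceCtorEq] at heq
    · exact shiftInj (by omega) (by omega) heq
    · exact shiftInj (by omega) (by omega) heq
  have hWsub : W n k t ⊆ segment n k t := by
    intro x hx
    obtain ⟨j, hj, rfl⟩ := Finset.mem_image.mp hx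
    rw [segment, Finset.mem_union]
    by_cases c : j % 2 = j / k
    · exact Or.inl (Finset.mem_image.mpr ⟨j, hj, by simp [w, c, u]⟩)
    · exact Or.inr (Finset.mem_image.mpr ⟨j, hj, by simp [w, c, v]⟩)
  set G := SimpleGraph.induce (↑(segment n k t) : Set (ZMod n ⊕ ZMod n)) (P n k) with hG
  have hGadj : ∀ a b : (↑(segment n k t) : Set (ZMod n ⊕ ZMod n)),
      G.Adj a b ↔ (P n k).Adj a.1 b.1 := fun a b => Iff.rfl
  -- upper bound
  have hub : ∀ m ∈ {m | ∃ s : Finset (↑(segment n k t) : Set (ZMod n ⊕ ZMod n)),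
      IsIndep G s ∧ s.card = m}, m ≤ 2 * k := by
    rintro m ⟨s, hind, rfl⟩
    set f : (↑(segment n k t) : Set (ZMod n ⊕ ZMod n)) → ZMod n :=
      fun x => Sum.elim id id x.1 with hf
    have hfib : ∀ c : ZMod n, (s.filter fun x => f x = c).card ≤ 1 := by
      intro c
      rw [Finset.card_le_one]
      intro a ha b hb
      rw [Finset.mem_filter] at ha hb
      have hADJ := hind a ha.1 b hb.1
      rw [hGadj] at hADJ
      have hxy : Sum.elim id id a.1 = Sum.elim id id b.1 := ha.2.trans hb.2.symm
      apply Subtype.ext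
      rcases ha' : a.1 with i | i <;> rcases hb' : b.1 with i' | i' <;>
          rw [ha', hb'] at hxy hADJ <;>
          simp only [Sum.elim_inl, Sum.elim_inr, id_eq] at hxy <;> subst hxy
      · rfl
      · exact absurd ((SimpleGraph.fromRel_adj (adjFun n k) _ _).mpr
          ⟨by simp, Or.inl (adjFun_lr.mpr rfl)⟩) hADJ
      · exact absurd ((SimpleGraph.fromRel_adj (adjFun n k) _ _).mpr
          ⟨by simp, Or.inr (adjFun_lr.mpr rfl)⟩) hADJ
      · rfl
    calc s.card
        = ∑ c ∈ s.image f, (s.filter fun x => f x = c).card :=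
          Finset.card_eq_sum_card_fiberwise (fun x hx => Finset.mem_image_of_mem _ hx)
      _ ≤ ∑ _c ∈ s.image f, 1 := Finset.sum_le_sum (fun c _ => hfib c)
      _ = (s.image f).card := by simp
      _ ≤ ((Finset.range (2*k)).image fun j : ℕ => t + (j : ZMod n)).card := by
          apply Finset.card_le_card
          intro c hc
          obtain ⟨x, hx, rfl⟩ := Finset.mem_image.mp hc
          have hxseg : x.1 ∈ segment n k t := Finset.mem_coe.mp x.2
          simp only [segment, Finset.mem_union] at hxseg
          rcases hxseg with h | h <;> obtain ⟨j, hj, he⟩ := Finset.mem_image.mp h <;>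
            exact Finset.mem_image.mpr ⟨j, hj, by simp only [hf]; rw [← he]; rfl⟩
      _ ≤ (Finset.range (2*k)).card := Finset.card_image_le
      _ = 2 * k := Finset.card_range _
  -- lower bound witness in the subtype
  have hmem : 2 * k ∈ {m | ∃ s : Finset (↑(segment n k t) : Set (ZMod n ⊕ ZMod n)),
      IsIndep G s ∧ s.card = m} := by
    refine ⟨(W n k t).subtype (fun x => x ∈ (↑(segment n k t) : Set (ZMod n ⊕ ZMod n))), ?_, ?_⟩
    · intro a ha b hb hadj
      rw [Finset.mem_subtype] at ha hb
      rw [hGadj] at hadj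
      exact hWind _ ha _ hb hadj
    · rw [Finset.card_subtype, Finset.filter_true_of_mem, hWcard]
      intro x hx
      exact Finset.mem_coe.mpr (hWsub hx)
  exact le_antisymm (csSup_le ⟨_, hmem⟩ hub) (le_csSup ⟨2 * k, fun m hm => hub m hm⟩ hmem)


end GP
end

section
/- Let k ≥ 2 be an even integer and n ≥ 3k an integer, and fix an index t. The set S_t = {u_{t+2j} : 0 ≤ j ≤ k/2−1} ∪ {v_{t+2j+1} : 0 ≤ j ≤ k/2−1} ∪ {u_{t+k+2j+1} : 0 ≤ j ≤ k/2−1} ∪ {v_{t+k+2j} : 0 ≤ j ≤ k/2−1} (indices modulo n) is the unique independent set of size 2k in the subgraph of P(n,k) induced by the 2k-segment I_t. -/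
namespace GP

/-- The set `S_t` of Lemma 1 (Figure 1): the unique maximum independent set of `G[I_t]`. -/
def St (n k : ℕ) (t : ZMod n) : Finset (ZMod n ⊕ ZMod n) :=
  ((Finset.range (k / 2)).image fun j : ℕ => u n (t + ((2 * j : ℕ) : ZMod n))) ∪
  ((Finset.range (k / 2)).image fun j : ℕ => v n (t + ((2 * j + 1 : ℕ) : ZMod n))) ∪
  ((Finset.range (k / 2)).image fun j : ℕ => u n (t + ((k + 2 * j + 1 : ℕ) : ZMod n))) ∪
  ((Finset.range (k / 2)).image fun j : ℕ => v n (t + ((k + 2 * j : ℕ) : ZMod n)))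

variable {n k : ℕ}

lemma natCast_inj_of_lt (hn : 0 < n) {a b : ℕ} (ha : a < n) (hb : b < n) :
    (a : ZMod n) = (b : ZMod n) ↔ a = b := by
  haveI : NeZero n := ⟨hn.ne'⟩
  constructor
  · intro h
    have := congrArg ZMod.val h
    rwa [ZMod.val_natCast_of_lt ha, ZMod.val_natCast_of_lt hb] at this
  · rintro rfl; rfl

lemma shift_inj (hn : 0 < n) (t : ZMod n) {a b : ℕ} (ha : a < n) (hb : b < n) :
    t + (a : ZMod n) = t + (b : ZMod n) ↔ a = b := by
  rw [add_right_inj, natCast_inj_of_lt hn ha hb]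

lemma adj_uu (hk2 : 2 ≤ k) (hn3 : 3*k ≤ n) (t : ZMod n) {a b : ℕ}
    (ha : a < 2*k) (hb : b < 2*k) :
    (P n k).Adj (u n (t + a)) (u n (t + b)) ↔ (b = a + 1 ∨ a = b + 1) := by
  have hn0 : 0 < n := by omega
  have h1 : t + (a:ZMod n) + 1 = t + ((a+1 : ℕ) : ZMod n) := by push_cast; ring
  have h2 : t + (b:ZMod n) + 1 = t + ((b+1 : ℕ) : ZMod n) := by push_cast; ring
  simp only [P, SimpleGraph.fromRel_adj, u, adjFun, ne_eq, Sum.inl.injEq]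
  rw [h1, h2, shift_inj hn0 t (by omega) (by omega),
    shift_inj hn0 t (by omega) (by omega), shift_inj hn0 t (by omega) (by omega)]
  omega

lemma adj_uv (hk2 : 2 ≤ k) (hn3 : 3*k ≤ n) (t : ZMod n) {a b : ℕ}
    (ha : a < 2*k) (hb : b < 2*k) :
    (P n k).Adj (u n (t + a)) (v n (t + b)) ↔ a = b := by
  have hn0 : 0 < n := by omega
  simp only [P, SimpleGraph.fromRel_adj, u, v, adjFun, ne_eq]
  rw [shift_inj hn0 t (by omega) (by omega)]
  simp [eq_comm]

lemma adj_vu (hk2 : 2 ≤ k) (hn3 : 3*k ≤ n) (t : ZMod n) {a b : ℕ}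
    (ha : a < 2*k) (hb : b < 2*k) :
    (P n k).Adj (v n (t + a)) (u n (t + b)) ↔ a = b := by
  rw [SimpleGraph.adj_comm, adj_uv hk2 hn3 t hb ha, eq_comm]

lemma adj_vv (hk2 : 2 ≤ k) (hn3 : 3*k ≤ n) (t : ZMod n) {a b : ℕ}
    (ha : a < 2*k) (hb : b < 2*k) :
    (P n k).Adj (v n (t + a)) (v n (t + b)) ↔ (b = a + k ∨ a = b + k) := by
  have hn0 : 0 < n := by omega
  have h1 : t + (a:ZMod n) + (k:ZMod n) = t + ((a+k : ℕ) : ZMod n) := by push_cast; ring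
  have h2 : t + (b:ZMod n) + (k:ZMod n) = t + ((b+k : ℕ) : ZMod n) := by push_cast; ring
  simp only [P, SimpleGraph.fromRel_adj, v, adjFun, ne_eq, Sum.inr.injEq]
  rw [h1, h2, shift_inj hn0 t (by omega) (by omega),
    shift_inj hn0 t (by omega) (by omega), shift_inj hn0 t (by omega) (by omega)]
  omega

lemma mem_segment_iff (t : ZMod n) (x : ZMod n ⊕ ZMod n) :
    x ∈ segment n k t ↔ ∃ a, a < 2*k ∧ (x = u n (t + a) ∨ x = v n (t + a)) := by
  simp only [segment, Finset.mem_union, Finset.mem_image, Finset.mem_range]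
  constructor
  · rintro (⟨j, hj, rfl⟩ | ⟨j, hj, rfl⟩)
    · exact ⟨j, hj, Or.inl rfl⟩
    · exact ⟨j, hj, Or.inr rfl⟩
  · rintro ⟨a, ha, rfl | rfl⟩
    · exact Or.inl ⟨a, ha, rfl⟩
    · exact Or.inr ⟨a, ha, rfl⟩

lemma mem_St_u (hke : Even k) (hk2 : 2 ≤ k) (hn3 : 3*k ≤ n) (t : ZMod n) {a : ℕ}
    (ha : a < 2*k) :
    u n (t + a) ∈ St n k t ↔ ((a % 2 = 0 ∧ a < k) ∨ (a % 2 = 1 ∧ k ≤ a)) := by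
  obtain ⟨m, hm⟩ := hke
  have hn0 : 0 < n := by omega
  simp only [St, Finset.mem_union, Finset.mem_image, Finset.mem_range, u, v,
    Sum.inl.injEq, reduceCtorEq, and_false, exists_false, or_false, false_or,
    exists_and_left]
  constructor
  · rintro (⟨j, hj, he⟩ | ⟨j, hj, he⟩)
    · rw [shift_inj hn0 t (by omega) (by omega)] at he; omega
    · rw [shift_inj hn0 t (by omega) (by omega)] at he; omega
  · rintro (⟨h1, h2⟩ | ⟨h1, h2⟩)
    · exact Or.inl ⟨a / 2, by omega, by rw [shift_inj hn0 t (by omega) (by omega)]; omega⟩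
    · exact Or.inr ⟨(a - k - 1) / 2, by omega,
        by rw [shift_inj hn0 t (by omega) (by omega)]; omega⟩

lemma mem_St_v (hke : Even k) (hk2 : 2 ≤ k) (hn3 : 3*k ≤ n) (t : ZMod n) {a : ℕ}
    (ha : a < 2*k) :
    v n (t + a) ∈ St n k t ↔ ((a % 2 = 1 ∧ a < k) ∨ (a % 2 = 0 ∧ k ≤ a)) := by
  obtain ⟨m, hm⟩ := hke
  have hn0 : 0 < n := by omega
  simp only [St, Finset.mem_union, Finset.mem_image, Finset.mem_range, u, v,
    Sum.inr.injEq, reduceCtorEq, and_false, exists_false, or_false, false_or,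
    exists_and_left]
  constructor
  · rintro (⟨j, hj, he⟩ | ⟨j, hj, he⟩)
    · rw [shift_inj hn0 t (by omega) (by omega)] at he; omega
    · rw [shift_inj hn0 t (by omega) (by omega)] at he; omega
  · rintro (⟨h1, h2⟩ | ⟨h1, h2⟩)
    · exact Or.inl ⟨(a - 1) / 2, by omega,
        by rw [shift_inj hn0 t (by omega) (by omega)]; omega⟩
    · exact Or.inr ⟨(a - k) / 2, by omega,
        by rw [shift_inj hn0 t (by omega) (by omega)]; omega⟩

lemma mem_St_elim (hke : Even k) (hk2 : 2 ≤ k) (t : ZMod n) {x : ZMod n ⊕ ZMod n}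
    (hx : x ∈ St n k t) :
    ∃ a, a < 2*k ∧ ((x = u n (t + a) ∧ ((a % 2 = 0 ∧ a < k) ∨ (a % 2 = 1 ∧ k ≤ a))) ∨
      (x = v n (t + a) ∧ ((a % 2 = 1 ∧ a < k) ∨ (a % 2 = 0 ∧ k ≤ a)))) := by
  obtain ⟨m, hm⟩ := hke
  simp only [St, Finset.mem_union, Finset.mem_image, Finset.mem_range] at hx
  rcases hx with (((⟨j, hj, rfl⟩ | ⟨j, hj, rfl⟩) | ⟨j, hj, rfl⟩) | ⟨j, hj, rfl⟩)
  · exact ⟨2*j, by omega, Or.inl ⟨rfl, by omega⟩⟩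
  · exact ⟨2*j+1, by omega, Or.inr ⟨rfl, by omega⟩⟩
  · exact ⟨k+2*j+1, by omega, Or.inl ⟨rfl, by omega⟩⟩
  · exact ⟨k+2*j, by omega, Or.inr ⟨rfl, by omega⟩⟩

lemma St_card (hke : Even k) (hk2 : 2 ≤ k) (hn3 : 3*k ≤ n) (t : ZMod n) :
    (St n k t).card = 2*k := by
  obtain ⟨m, hm⟩ := hke
  have hn0 : 0 < n := by omega
  have duv : ∀ (c d : ℕ) (f g : ℕ → ℕ),
      Disjoint ((Finset.range c).image fun j : ℕ => u n (t + ((f j : ℕ) : ZMod n)))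
        ((Finset.range d).image fun j : ℕ => v n (t + ((g j : ℕ) : ZMod n))) := by
    intro c d f g
    rw [Finset.disjoint_left]
    rintro x hx hy
    simp only [Finset.mem_image] at hx hy
    obtain ⟨j, _, rfl⟩ := hx
    obtain ⟨j', _, h⟩ := hy
    exact absurd h (by simp [u, v])
  have d13 : Disjoint ((Finset.range (k/2)).image fun j : ℕ => u n (t + ((2 * j : ℕ) : ZMod n)))
      ((Finset.range (k/2)).image fun j : ℕ => u n (t + ((k + 2 * j + 1 : ℕ) : ZMod n))) := by
    rw [Finset.disjoint_left]
    rintro x hx hy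
    simp only [Finset.mem_image, Finset.mem_range] at hx hy
    obtain ⟨j, hj, rfl⟩ := hx
    obtain ⟨j', hj', h⟩ := hy
    simp only [u, Sum.inl.injEq] at h
    rw [shift_inj hn0 t (by omega) (by omega)] at h
    omega
  have d24 : Disjoint ((Finset.range (k/2)).image fun j : ℕ => v n (t + ((2 * j + 1 : ℕ) : ZMod n)))
      ((Finset.range (k/2)).image fun j : ℕ => v n (t + ((k + 2 * j : ℕ) : ZMod n))) := by
    rw [Finset.disjoint_left]
    rintro x hx hy
    simp only [Finset.mem_image, Finset.mem_range] at hx hy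
    obtain ⟨j, hj, rfl⟩ := hx
    obtain ⟨j', hj', h⟩ := hy
    simp only [v, Sum.inr.injEq] at h
    rw [shift_inj hn0 t (by omega) (by omega)] at h
    omega
  have c1 : ((Finset.range (k/2)).image fun j : ℕ => u n (t + ((2 * j : ℕ) : ZMod n))).card
      = k/2 := by
    rw [Finset.card_image_of_injOn, Finset.card_range]
    intro a ha b hb h
    simp only [Finset.coe_range, Set.mem_Iio] at ha hb
    simp only [u, Sum.inl.injEq] at h
    rw [shift_inj hn0 t (by omega) (by omega)] at h
    omega
  have c2 : ((Finset.range (k/2)).image fun j : ℕ => v n (t + ((2 * j + 1 : ℕ) : ZMod n))).card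
      = k/2 := by
    rw [Finset.card_image_of_injOn, Finset.card_range]
    intro a ha b hb h
    simp only [Finset.coe_range, Set.mem_Iio] at ha hb
    simp only [v, Sum.inr.injEq] at h
    rw [shift_inj hn0 t (by omega) (by omega)] at h
    omega
  have c3 : ((Finset.range (k/2)).image fun j : ℕ => u n (t + ((k + 2 * j + 1 : ℕ) : ZMod n))).card
      = k/2 := by
    rw [Finset.card_image_of_injOn, Finset.card_range]
    intro a ha b hb h
    simp only [Finset.coe_range, Set.mem_Iio] at ha hb
    simp only [u, Sum.inl.injEq] at h
    rw [shift_inj hn0 t (by omega) (by omega)] at h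
    omega
  have c4 : ((Finset.range (k/2)).image fun j : ℕ => v n (t + ((k + 2 * j : ℕ) : ZMod n))).card
      = k/2 := by
    rw [Finset.card_image_of_injOn, Finset.card_range]
    intro a ha b hb h
    simp only [Finset.coe_range, Set.mem_Iio] at ha hb
    simp only [v, Sum.inr.injEq] at h
    rw [shift_inj hn0 t (by omega) (by omega)] at h
    omega
  rw [St, Finset.card_union_of_disjoint, Finset.card_union_of_disjoint,
    Finset.card_union_of_disjoint, c1, c2, c3, c4]
  · omega
  · exact duv _ _ (fun j => 2*j) (fun j => 2*j+1)
  · rw [Finset.disjoint_union_left]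
    exact ⟨d13, (duv _ _ (fun j => k+2*j+1) (fun j => 2*j+1)).symm⟩
  · rw [Finset.disjoint_union_left, Finset.disjoint_union_left]
    exact ⟨⟨duv _ _ (fun j => 2*j) (fun j => k+2*j), d24⟩,
      duv _ _ (fun j => k+2*j+1) (fun j => k+2*j)⟩

lemma St_indep (hke : Even k) (hk2 : 2 ≤ k) (hn3 : 3*k ≤ n) (t : ZMod n) :
    IsIndep (P n k) (St n k t) := by
  obtain ⟨m, hm⟩ := hke
  intro x hx y hy hadj
  obtain ⟨a, ha, hxc⟩ := mem_St_elim ⟨m, hm⟩ hk2 t hx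
  obtain ⟨b, hb, hyc⟩ := mem_St_elim ⟨m, hm⟩ hk2 t hy
  rcases hxc with ⟨rfl, hpa⟩ | ⟨rfl, hpa⟩ <;> rcases hyc with ⟨rfl, hpb⟩ | ⟨rfl, hpb⟩
  · rw [adj_uu hk2 hn3 t ha hb] at hadj; omega
  · rw [adj_uv hk2 hn3 t ha hb] at hadj; omega
  · rw [adj_vu hk2 hn3 t ha hb] at hadj; omega
  · rw [adj_vv hk2 hn3 t ha hb] at hadj; omega

lemma forward (hke : Even k) (hk2 : 2 ≤ k) (hn3 : 3*k ≤ n) (t : ZMod n)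
    (s : Finset (ZMod n ⊕ ZMod n)) (hsub : s ⊆ segment n k t)
    (hI : IsIndep (P n k) s) (hcard : s.card = 2*k) : s = St n k t := by
  classical
  obtain ⟨m, hm⟩ := hke
  have hn0 : 0 < n := by omega
  set A : Finset ℕ := (Finset.range (2*k)).filter (fun a => u n (t + a) ∈ s) with hA
  set B : Finset ℕ := (Finset.range (2*k)).filter (fun a => v n (t + a) ∈ s) with hB
  have hAmem : ∀ a : ℕ, a ∈ A ↔ (a < 2*k ∧ u n (t + a) ∈ s) := by
    intro a; simp [hA]
  have hBmem : ∀ a : ℕ, a ∈ B ↔ (a < 2*k ∧ v n (t + a) ∈ s) := by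
    intro a; simp [hB]
  -- decomposition of s
  have hs : s = A.image (fun a : ℕ => u n (t + a)) ∪ B.image (fun a : ℕ => v n (t + a)) := by
    ext x
    simp only [Finset.mem_union, Finset.mem_image]
    constructor
    · intro hx
      obtain ⟨a, ha, hcase⟩ := (mem_segment_iff t x).1 (hsub hx)
      rcases hcase with rfl | rfl
      · exact Or.inl ⟨a, (hAmem a).2 ⟨ha, hx⟩, rfl⟩
      · exact Or.inr ⟨a, (hBmem a).2 ⟨ha, hx⟩, rfl⟩
    · rintro (⟨a, ha, rfl⟩ | ⟨a, ha, rfl⟩)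
      · exact ((hAmem a).1 ha).2
      · exact ((hBmem a).1 ha).2
  have injU : Set.InjOn (fun a : ℕ => u n (t + a)) A := by
    intro a ha b hb h
    rw [Finset.mem_coe, hAmem] at ha hb
    simp only [u, Sum.inl.injEq] at h
    exact (shift_inj hn0 t (by omega) (by omega)).1 h
  have injV : Set.InjOn (fun a : ℕ => v n (t + a)) B := by
    intro a ha b hb h
    rw [Finset.mem_coe, hBmem] at ha hb
    simp only [v, Sum.inr.injEq] at h
    exact (shift_inj hn0 t (by omega) (by omega)).1 h
  have hdisj : Disjoint (A.image fun a : ℕ => u n (t + a))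
      (B.image fun a : ℕ => v n (t + a)) := by
    rw [Finset.disjoint_left]
    rintro x hx hy
    simp only [Finset.mem_image] at hx hy
    obtain ⟨a, _, rfl⟩ := hx
    obtain ⟨b, _, h⟩ := hy
    exact absurd h (by simp [u, v])
  have hcardAB : A.card + B.card = 2*k := by
    rw [hs, Finset.card_union_of_disjoint hdisj, Finset.card_image_of_injOn injU,
      Finset.card_image_of_injOn injV] at hcard
    exact hcard
  -- constraints
  have hCu : ∀ a : ℕ, a + 1 < 2*k → a ∈ A → a + 1 ∉ A := by
    intro a h1 ha ha1
    rw [hAmem] at ha ha1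
    exact hI _ ha.2 _ ha1.2 ((adj_uu hk2 hn3 t (by omega) (by omega)).2 (Or.inl rfl))
  have hCuv : ∀ a : ℕ, a ∈ A → a ∉ B := by
    intro a ha hb
    rw [hAmem] at ha
    rw [hBmem] at hb
    exact hI _ ha.2 _ hb.2 ((adj_uv hk2 hn3 t ha.1 hb.1).2 rfl)
  have hCv : ∀ a : ℕ, a + k < 2*k → a ∈ B → a + k ∉ B := by
    intro a h1 ha ha1
    rw [hBmem] at ha ha1
    exact hI _ ha.2 _ ha1.2 ((adj_vv hk2 hn3 t (by omega) (by omega)).2 (Or.inl rfl))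
  -- injectivity of block maps
  have hinjdiv : Set.InjOn (fun a : ℕ => a / 2) A := by
    intro a ha b hb h
    simp only [Finset.mem_coe] at ha hb
    by_contra hne
    have ha2 := ((hAmem a).1 ha).1
    have hb2 := ((hAmem b).1 hb).1
    have h' : a / 2 = b / 2 := h
    rcases Nat.lt_or_ge a b with hlt | hge
    · have hb1 : b = a + 1 := by omega
      exact hCu a (by omega) ha (hb1 ▸ hb)
    · have ha1 : a = b + 1 := by omega
      exact hCu b (by omega) hb (ha1 ▸ ha)

  have hinjmod : Set.InjOn (fun a : ℕ => if a < k then a else a - k) B := by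
    intro a ha b hb h
    simp only [Finset.mem_coe] at ha hb
    by_contra hne
    have ha2 := ((hBmem a).1 ha).1
    have hb2 := ((hBmem b).1 hb).1
    have h' : (if a < k then a else a - k) = (if b < k then b else b - k) := h
    split_ifs at h' <;>
    first
    | omega
    | · have hb1 : b = a + k := by omega
        exact hCv a (by omega) ha (hb1 ▸ hb)
    | · have ha1 : a = b + k := by omega
        exact hCv b (by omega) hb (ha1 ▸ ha)
  have hAmap : ∀ a ∈ A, a / 2 ∈ Finset.range k := by
    intro a ha
    have := ((hAmem a).1 ha).1
    simp only [Finset.mem_range]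
    omega
  have hBmap : ∀ a ∈ B, (if a < k then a else a - k) ∈ Finset.range k := by
    intro a ha
    have := ((hBmem a).1 ha).1
    simp only [Finset.mem_range]
    split_ifs <;> omega
  have hAle : A.card ≤ k := by
    have := Finset.card_le_card_of_injOn (fun a : ℕ => a / 2) hAmap hinjdiv
    simpa using this
  have hBle : B.card ≤ k := by
    have := Finset.card_le_card_of_injOn (fun a : ℕ => if a < k then a else a - k)
      hBmap hinjmod
    simpa using this
  have hAk : A.card = k := by omega
  have hBk : B.card = k := by omega
  -- block / pair surjectivity
  have himgA : A.image (fun a : ℕ => a / 2) = Finset.range k := by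
    apply Finset.eq_of_subset_of_card_le
    · intro x hx
      simp only [Finset.mem_image] at hx
      obtain ⟨a, ha, rfl⟩ := hx
      exact hAmap a ha
    · rw [Finset.card_image_of_injOn hinjdiv, hAk, Finset.card_range]
  have himgB : B.image (fun a : ℕ => if a < k then a else a - k) = Finset.range k := by
    apply Finset.eq_of_subset_of_card_le
    · intro x hx
      simp only [Finset.mem_image] at hx
      obtain ⟨a, ha, rfl⟩ := hx
      exact hBmap a ha
    · rw [Finset.card_image_of_injOn hinjmod, hBk, Finset.card_range]
  have blockA : ∀ i : ℕ, i < k → (2*i ∈ A ∨ 2*i+1 ∈ A) := by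
    intro i hi
    have : i ∈ A.image (fun a : ℕ => a / 2) := by
      rw [himgA]; simp [hi]
    simp only [Finset.mem_image] at this
    obtain ⟨a, ha, hae⟩ := this
    have ha2 := ((hAmem a).1 ha).1
    have hae' : a / 2 = i := hae
    have : a = 2*i ∨ a = 2*i+1 := by omega
    rcases this with rfl | rfl
    · exact Or.inl ha
    · exact Or.inr ha
  have pairB : ∀ j : ℕ, j < k → (j ∈ B ∨ j + k ∈ B) := by
    intro j hj
    have : j ∈ B.image (fun a : ℕ => if a < k then a else a - k) := by
      rw [himgB]; simp [hj]
    simp only [Finset.mem_image] at this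
    obtain ⟨a, ha, hae⟩ := this
    have ha2 := ((hBmem a).1 ha).1
    have hae' : (if a < k then a else a - k) = j := hae
    have : a = j ∨ a = j + k := by split_ifs at hae' <;> omega
    rcases this with rfl | rfl
    · exact Or.inl ha
    · exact Or.inr ha
  -- A and B cover range (2k)
  have hdisjAB : Disjoint A B := Finset.disjoint_left.2 (fun a ha hb => hCuv a ha hb)
  have hcover : ∀ a : ℕ, a < 2*k → (a ∈ A ∨ a ∈ B) := by
    intro a ha
    by_contra hcon
    push_neg at hcon
    have hsubr : A ∪ B ⊆ (Finset.range (2*k)).erase a := by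
      intro x hx
      rcases Finset.mem_union.1 hx with hx | hx
      · have := (hAmem x).1 hx
        simp only [Finset.mem_erase, Finset.mem_range]
        exact ⟨fun he => hcon.1 (he ▸ hx), this.1⟩
      · have := (hBmem x).1 hx
        simp only [Finset.mem_erase, Finset.mem_range]
        exact ⟨fun he => hcon.2 (he ▸ hx), this.1⟩
    have hle := Finset.card_le_card hsubr
    rw [Finset.card_union_of_disjoint hdisjAB,
      Finset.card_erase_of_mem (Finset.mem_range.2 ha), Finset.card_range] at hle
    omega
  -- upward closure of odd elements of A
  have up : ∀ i : ℕ, i + 1 < k → 2*i+1 ∈ A → 2*(i+1)+1 ∈ A := by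
    intro i hi h
    have h2 : 2*(i+1) ∉ A := by
      intro hmem
      have he : 2*(i+1) = (2*i+1) + 1 := by ring
      exact hCu (2*i+1) (by omega) h (he ▸ hmem)
    exact (blockA (i+1) (by omega)).resolve_left h2
  have chain : ∀ d i : ℕ, i + d < k → 2*i+1 ∈ A → 2*(i+d)+1 ∈ A := by
    intro d
    induction d with
    | zero => intro i h hA0; simpa using hA0
    | succ d ih =>
      intro i h hA0
      have h1 := ih i (by omega) hA0
      have h2 := up (i+d) (by omega) h1
      have he : 2*(i+(d+1)) = 2*(i+d+1) := by ring
      rw [he]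
      exact h2
  have evens : ∀ i : ℕ, i < m → 2*i ∈ A := by
    intro i hi
    by_contra hno
    have hodd : 2*i+1 ∈ A := (blockA i (by omega)).resolve_left hno
    have h2 : 2*(i+m)+1 ∈ A := chain m i (by omega) hodd
    have hb1 : 2*i+1 ∉ B := hCuv _ hodd
    have hb2 : 2*i+1+k ∉ B := by
      have he : 2*i+1+k = 2*(i+m)+1 := by omega
      rw [he]
      exact hCuv _ h2
    rcases pairB (2*i+1) (by omega) with h | h
    · exact hb1 h
    · exact hb2 h
  -- full characterization of A
  have hAfull : ∀ a : ℕ, a < 2*k →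
      (a ∈ A ↔ ((a % 2 = 0 ∧ a < k) ∨ (a % 2 = 1 ∧ k ≤ a))) := by
    have evens' : ∀ a : ℕ, a < k → a % 2 = 0 → a ∈ A := by
      intro a ha he
      have : a = 2*(a/2) := by omega
      rw [this]
      exact evens (a/2) (by omega)
    have odds' : ∀ a : ℕ, a < k → a % 2 = 1 → a ∉ A := by
      intro a ha he hmem
      have h0 : a - 1 ∈ A := evens' (a-1) (by omega) (by omega)
      have h1 : (a - 1) + 1 ∉ A := hCu (a-1) (by omega) h0
      have : (a - 1) + 1 = a := by omega
      exact h1 (this ▸ hmem)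
    intro a ha
    rcases Nat.lt_or_ge a k with hak | hak
    · rcases Nat.even_or_odd a with he | ho
      · have he2 : a % 2 = 0 := Nat.even_iff.1 he
        exact ⟨fun _ => Or.inl ⟨he2, hak⟩, fun _ => evens' a hak he2⟩
      · have ho2 : a % 2 = 1 := Nat.odd_iff.1 ho
        exact ⟨fun hmem => absurd hmem (odds' a hak ho2), fun hp => by omega⟩
    · -- a ≥ k
      rcases Nat.even_or_odd a with he | ho
      · have he2 : a % 2 = 0 := Nat.even_iff.1 he
        -- j = a - k even, < k, so j ∈ A, j ∉ B, hence j+k = a ∈ B, so a ∉ A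
        have hj : a - k ∈ A := evens' (a-k) (by omega) (by omega)
        have hjB : a - k ∉ B := hCuv _ hj
        have haB : a ∈ B := by
          rcases pairB (a-k) (by omega) with h | h
          · exact absurd h hjB
          · have : a - k + k = a := by omega
            exact this ▸ h
        exact ⟨fun hmem => absurd haB (by
            intro hb; exact hCuv a hmem hb), fun hp => by omega⟩
      · have ho2 : a % 2 = 1 := Nat.odd_iff.1 ho
        have hj : a - k ∉ A := odds' (a-k) (by omega) (by omega)
        have hjB : a - k ∈ B := (hcover (a-k) (by omega)).resolve_left hj
        have haB : a ∉ B := by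
          have := hCv (a-k) (by omega) hjB
          have he : a - k + k = a := by omega
          exact he ▸ this
        have haA : a ∈ A := (hcover a ha).resolve_right haB
        exact ⟨fun _ => Or.inr ⟨ho2, hak⟩, fun _ => haA⟩
  have hBfull : ∀ a : ℕ, a < 2*k →
      (a ∈ B ↔ ((a % 2 = 1 ∧ a < k) ∨ (a % 2 = 0 ∧ k ≤ a))) := by
    intro a ha
    have h1 : a ∈ B ↔ a ∉ A :=
      ⟨fun hb hA => hCuv a hA hb, fun hA => (hcover a ha).resolve_left hA⟩
    rw [h1, hAfull a ha]
    omega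
  -- conclude
  ext x
  by_cases hx : x ∈ segment n k t
  · obtain ⟨a, ha, hc⟩ := (mem_segment_iff t x).1 hx
    rcases hc with rfl | rfl
    · rw [mem_St_u ⟨m, hm⟩ hk2 hn3 t ha]
      constructor
      · intro hxs
        exact (hAfull a ha).1 ((hAmem a).2 ⟨ha, hxs⟩)
      · intro hp
        exact ((hAmem a).1 ((hAfull a ha).2 hp)).2
    · rw [mem_St_v ⟨m, hm⟩ hk2 hn3 t ha]
      constructor
      · intro hxs
        exact (hBfull a ha).1 ((hBmem a).2 ⟨ha, hxs⟩)
      · intro hp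
        exact ((hBmem a).1 ((hBfull a ha).2 hp)).2
  · constructor
    · intro hxs
      exact absurd (hsub hxs) hx
    · intro hxst
      obtain ⟨a, ha, hc⟩ := mem_St_elim ⟨m, hm⟩ hk2 t hxst
      rcases hc with ⟨rfl, -⟩ | ⟨rfl, -⟩
      · exact absurd ((mem_segment_iff t _).2 ⟨a, ha, Or.inl rfl⟩) hx
      · exact absurd ((mem_segment_iff t _).2 ⟨a, ha, Or.inr rfl⟩) hx

/-- For even `k ≥ 2` and `n ≥ 3k`, `S_t` is the unique independent set of
size `2k` inside the `2k`-segment `I_t`. -/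
theorem segment_unique_alpha_set (n k : ℕ) (hke : Even k) (hk : 2 ≤ k) (hn : 3 * k ≤ n)
    (t : ZMod n) (s : Finset (ZMod n ⊕ ZMod n)) (hsub : s ⊆ segment n k t) :
    (IsIndep (P n k) s ∧ s.card = 2 * k) ↔ s = St n k t := by
  constructor
  · rintro ⟨hI, hcard⟩
    exact forward hke hk hn t s hsub hI hcard
  · rintro rfl
    exact ⟨St_indep hke hk hn t, St_card hke hk hn t⟩

end GP
end

section
/- Let k ≥ 2 be an even integer, n ≥ 3k an integer, and let S be a maximum independent set of P(n,k). If a 2k-segment I_t satisfies |I_t ∩ S| = 2k, then none of the four vertices u_{t+2k}, v_{t+2k}, u_{t−1}, v_{t−1} (indices modulo n) belongs to S. -/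
namespace GP

lemma core (k : ℕ) (hke : Even k) (hk : 2 ≤ k) (f : ℕ → Prop)
    (hcons : ∀ j, j + 2 ≤ 2*k → ¬(f j ∧ f (j+1)))
    (hpair : ∀ i, i < k → (f i ↔ ¬ f (i+k))) : f 0 := by
  by_contra h0
  have hfk : f k := by
    by_contra hfk
    have h0' := (hpair 0 (by omega)).mpr (by rw [Nat.zero_add]; exact hfk)
    exact h0 h0'
  have claim : ∀ m, 2*m+1 < k → ¬ f (2*m) ∧ f (2*m+1) := by
    intro m
    induction m with
    | zero =>
      intro hm
      refine ⟨by simpa using h0, ?_⟩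
      have h1 : ¬ f (k+1) := fun h => hcons k (by omega) ⟨hfk, h⟩
      have h1' : ¬ f (1+k) := by rw [show 1+k = k+1 from by omega]; exact h1
      have := (hpair 1 (by omega)).mpr h1'
      simpa using this
    | succ m ih =>
      intro hm
      obtain ⟨h2m, h2m1⟩ := ih (by omega)
      have h22 : ¬ f (2*m+2) := fun h => hcons (2*m+1) (by omega) ⟨h2m1, h⟩
      have hk2 : f (2*m+2+k) := by
        by_contra h
        exact h22 ((hpair (2*m+2) (by omega)).mpr h)
      have h3k : ¬ f (2*m+3+k) := by
        intro h
        refine hcons (2*m+2+k) (by omega) ⟨hk2, ?_⟩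
        rw [show 2*m+2+k+1 = 2*m+3+k from by omega]; exact h
      have h3 : f (2*m+3) := (hpair (2*m+3) (by omega)).mpr h3k
      constructor
      · rw [show 2*(m+1) = 2*m+2 from by omega]; exact h22
      · rw [show 2*(m+1)+1 = 2*m+3 from by omega]; exact h3
  obtain ⟨c, hc⟩ := hke
  obtain ⟨_, hlast⟩ := claim (c-1) (by omega)
  refine hcons (2*(c-1)+1) (by omega) ⟨hlast, ?_⟩
  rw [show 2*(c-1)+1+1 = k from by omega]; exact hfk

lemma core' (k : ℕ) (hke : Even k) (hk : 2 ≤ k) (f : ℕ → Prop)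
    (hcons : ∀ j, j + 2 ≤ 2*k → ¬(f j ∧ f (j+1)))
    (hpair : ∀ i, i < k → (f i ↔ ¬ f (i+k))) : f (2*k-1) := by
  have := core k hke hk (fun j => f (2*k-1-j)) ?_ ?_
  · exact this
  · intro j hj hh
    obtain ⟨h1, h2⟩ := hh
    refine hcons (2*k-2-j) (by omega) ⟨?_, ?_⟩
    · rw [show 2*k-2-j = 2*k-1-(j+1) from by omega]; exact h2
    · rw [show 2*k-2-j+1 = 2*k-1-j from by omega]; exact h1
  · intro i hi
    beta_reduce
    have hb := hpair (k-1-i) (by omega)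
    rw [show k-1-i+k = 2*k-1-i from by omega] at hb
    rw [show 2*k-1-(i+k) = k-1-i from by omega]
    tauto

lemma natCast_injOn {n : ℕ} [NeZero n] {a b : ℕ} (ha : a < n) (hb : b < n)
    (h : (a : ZMod n) = b) : a = b := by
  calc a = ((a : ZMod n)).val := (ZMod.val_cast_of_lt ha).symm
    _ = ((b : ZMod n)).val := by rw [h]
    _ = b := ZMod.val_cast_of_lt hb


lemma adj_uu_s3 {n k : ℕ} [NeZero n] (hn1 : 1 < n) (i : ZMod n) :
    (P n k).Adj (u n i) (u n (i+1)) := by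
  refine (SimpleGraph.fromRel_adj _ _ _).mpr ⟨?_, Or.inl rfl⟩
  simp only [u, ne_eq, Sum.inl.injEq]
  intro h
  have h1 : (1 : ZMod n) = 0 := (left_eq_add.mp h)
  have : ((1:ℕ) : ZMod n) = ((0:ℕ) : ZMod n) := by simpa using h1
  have := natCast_injOn hn1 (by omega) this
  omega

lemma adj_uv_s3 {n k : ℕ} (i : ZMod n) : (P n k).Adj (u n i) (v n i) := by
  refine (SimpleGraph.fromRel_adj _ _ _).mpr ⟨?_, Or.inl rfl⟩
  simp [u, v]

lemma adj_vv_s3 {n k : ℕ} [NeZero n] (hk0 : 0 < k) (hkn : k < n) (i : ZMod n) :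
    (P n k).Adj (v n i) (v n (i + (k : ZMod n))) := by
  refine (SimpleGraph.fromRel_adj _ _ _).mpr ⟨?_, Or.inl rfl⟩
  simp only [v, ne_eq, Sum.inr.injEq]
  intro h
  have h1 : ((k:ℕ) : ZMod n) = ((0:ℕ) : ZMod n) := by simpa using (left_eq_add.mp h)
  have := natCast_injOn hkn (by omega) h1
  omega


/-- If `S` is a maximum independent set of `P(n,k)` (`k ≥ 2` even, `n ≥ 3k`)
and `|I_t ∩ S| = 2k`, then `u_{t+2k}, v_{t+2k}, u_{t−1}, v_{t−1} ∉ S`. -/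
theorem type1_neighbors_not_in_S (n k : ℕ) (hke : Even k) (hk : 2 ≤ k) (hn : 3 * k ≤ n)
    (S : Finset (ZMod n ⊕ ZMod n)) (hind : IsIndep (P n k) S) (hmax : S.card = alpha n k)
    (t : ZMod n) (ht : (segment n k t ∩ S).card = 2 * k) :
    u n (t + ((2 * k : ℕ) : ZMod n)) ∉ S ∧ v n (t + ((2 * k : ℕ) : ZMod n)) ∉ S ∧
      u n (t - 1) ∉ S ∧ v n (t - 1) ∉ S := by
  classical
  haveI : NeZero n := ⟨by omega⟩
  have hn1 : 1 < n := by omega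
  have hkn : k < n := by omega
  have h2kn : 2*k ≤ n := by omega
  -- the outer/inner indicator predicates
  set f : ℕ → Prop := fun j => u n (t + (j : ZMod n)) ∈ S with hfdef
  set g : ℕ → Prop := fun j => v n (t + (j : ZMod n)) ∈ S with hgdef
  have hf : ∀ j, f j ↔ u n (t + (j : ZMod n)) ∈ S := fun j => Iff.rfl
  have hg : ∀ j, g j ↔ v n (t + (j : ZMod n)) ∈ S := fun j => Iff.rfl
  -- basic adjacency consequences
  have hconsF : ∀ j : ℕ, ¬(f j ∧ f (j+1)) := by
    intro j ⟨h1, h2⟩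
    have hadj := adj_uu_s3 (n := n) (k := k) hn1 (t + (j : ZMod n))
    have hc : t + (j : ZMod n) + 1 = t + ((j+1 : ℕ) : ZMod n) := by push_cast; ring
    rw [hc] at hadj
    exact hind _ ((hf j).mp h1) _ ((hf (j+1)).mp h2) hadj
  have hconsG : ∀ j : ℕ, ¬(g j ∧ g (j+k)) := by
    intro j ⟨h1, h2⟩
    have hadj := adj_vv_s3 (n := n) (k := k) (by omega) hkn (t + (j : ZMod n))
    have hc : t + (j : ZMod n) + (k : ZMod n) = t + ((j+k : ℕ) : ZMod n) := by push_cast; ring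
    rw [hc] at hadj
    exact hind _ ((hg j).mp h1) _ ((hg (j+k)).mp h2) hadj
  have hspoke : ∀ j : ℕ, ¬(f j ∧ g j) := by
    intro j ⟨h1, h2⟩
    exact hind _ ((hf j).mp h1) _ ((hg j).mp h2) (adj_uv_s3 _)
  -- the filtered index sets
  set F : Finset ℕ := (Finset.range (2*k)).filter f with hFdef
  set G : Finset ℕ := (Finset.range (2*k)).filter g with hGdef
  have hmemF : ∀ i, i ∈ F ↔ (i < 2*k ∧ f i) := by
    intro i; rw [hFdef]; simp [Finset.mem_filter, Finset.mem_range]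
  have hmemG : ∀ i, i ∈ G ↔ (i < 2*k ∧ g i) := by
    intro i; rw [hGdef]; simp [Finset.mem_filter, Finset.mem_range]
  -- cardinality of the intersection
  have hinjU : Set.InjOn (fun j : ℕ => u n (t + (j : ZMod n))) (Finset.range (2*k)) := by
    intro a ha b hb hab
    simp only [Finset.coe_range, Set.mem_Iio] at ha hb
    simp only [u, Sum.inl.injEq] at hab
    exact natCast_injOn (by omega) (by omega) (add_left_cancel hab)
  have hinjV : Set.InjOn (fun j : ℕ => v n (t + (j : ZMod n))) (Finset.range (2*k)) := by
    intro a ha b hb hab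
    simp only [Finset.coe_range, Set.mem_Iio] at ha hb
    simp only [v, Sum.inr.injEq] at hab
    exact natCast_injOn (by omega) (by omega) (add_left_cancel hab)
  have hcount : F.card + G.card = 2*k := by
    have hdisj : Disjoint
        (((Finset.range (2*k)).image fun j : ℕ => u n (t + (j : ZMod n))) ∩ S)
        (((Finset.range (2*k)).image fun j : ℕ => v n (t + (j : ZMod n))) ∩ S) := by
      rw [Finset.disjoint_left]
      intro a ha hb
      have ha' := Finset.mem_of_mem_inter_left ha
      have hb' := Finset.mem_of_mem_inter_left hb
      simp only [Finset.mem_image] at ha' hb'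
      obtain ⟨x, -, hx⟩ := ha'
      obtain ⟨y, -, hy⟩ := hb'
      rw [← hx] at hy
      simp only [u, v] at hy
      exact Sum.inl_ne_inr hy.symm
    have hsplit : segment n k t ∩ S =
        (((Finset.range (2*k)).image fun j : ℕ => u n (t + (j : ZMod n))) ∩ S) ∪
        (((Finset.range (2*k)).image fun j : ℕ => v n (t + (j : ZMod n))) ∩ S) := by
      rw [segment, Finset.union_inter_distrib_right]
    have h1 : (((Finset.range (2*k)).image fun j : ℕ => u n (t + (j : ZMod n))) ∩ S) =
        F.image (fun j : ℕ => u n (t + (j : ZMod n))) := by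
      ext a
      simp only [Finset.mem_inter, Finset.mem_image, hFdef, Finset.mem_filter]
      constructor
      · rintro ⟨⟨x, hx, rfl⟩, haS⟩; exact ⟨x, ⟨hx, haS⟩, rfl⟩
      · rintro ⟨x, ⟨hx, hxS⟩, rfl⟩; exact ⟨⟨x, hx, rfl⟩, hxS⟩
    have h2 : (((Finset.range (2*k)).image fun j : ℕ => v n (t + (j : ZMod n))) ∩ S) =
        G.image (fun j : ℕ => v n (t + (j : ZMod n))) := by
      ext a
      simp only [Finset.mem_inter, Finset.mem_image, hGdef, Finset.mem_filter]
      constructor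
      · rintro ⟨⟨x, hx, rfl⟩, haS⟩; exact ⟨x, ⟨hx, haS⟩, rfl⟩
      · rintro ⟨x, ⟨hx, hxS⟩, rfl⟩; exact ⟨⟨x, hx, rfl⟩, hxS⟩
    have hFsub : F ⊆ Finset.range (2*k) := Finset.filter_subset _ _
    have hGsub : G ⊆ Finset.range (2*k) := Finset.filter_subset _ _
    rw [hsplit, Finset.card_union_of_disjoint hdisj, h1, h2,
      Finset.card_image_of_injOn (hinjU.mono (by exact_mod_cast hFsub)),
      Finset.card_image_of_injOn (hinjV.mono (by exact_mod_cast hGsub))] at ht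
    exact ht
  -- |F| ≤ k
  have hFle : F.card ≤ k := by
    have : F.card ≤ (Finset.range k).card := by
      apply Finset.card_le_card_of_injOn (fun a => a / 2)
      · intro a ha
        have := (hmemF a).mp ha
        simp only [Finset.mem_coe, Finset.mem_range]
        omega
      · intro a ha b hb hab
        simp only [Finset.mem_coe] at ha hb
        obtain ⟨ha2, hfa⟩ := (hmemF a).mp ha
        obtain ⟨hb2, hfb⟩ := (hmemF b).mp hb
        by_contra hne
        simp only at hab
        have : b = a + 1 ∨ a = b + 1 := by omega
        rcases this with h | h
        · exact hconsF a ⟨hfa, h ▸ hfb⟩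
        · exact hconsF b ⟨hfb, h ▸ hfa⟩
    simpa using this
  -- |G| ≤ k  and surjectivity of the pair map
  have hGinj : Set.InjOn (fun a : ℕ => if a < k then a else a - k) (G : Set ℕ) := by
    intro a ha b hb hab
    simp only [Finset.mem_coe] at ha hb
    obtain ⟨ha2, hga⟩ := (hmemG a).mp ha
    obtain ⟨hb2, hgb⟩ := (hmemG b).mp hb
    simp only at hab
    by_contra hne
    split_ifs at hab with h1 h2 h2
    · omega
    · have : b = a + k := by omega
      exact hconsG a ⟨hga, this ▸ hgb⟩
    · have : a = b + k := by omega
      exact hconsG b ⟨hgb, this ▸ hga⟩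
    · omega
  have hGmaps : ∀ a ∈ G, (if a < k then a else a - k) ∈ Finset.range k := by
    intro a ha
    have := (hmemG a).mp ha
    simp only [Finset.mem_range]
    split_ifs <;> omega
  have hGle : G.card ≤ k := by
    have : G.card ≤ (Finset.range k).card :=
      Finset.card_le_card_of_injOn _ hGmaps hGinj
    simpa using this
  have hFcard : F.card = k := by omega
  have hGcard : G.card = k := by omega
  -- F ∪ G = range (2k)
  have hFGdisj : Disjoint F G := by
    rw [Finset.disjoint_left]
    intro a haF haG
    exact hspoke a ⟨((hmemF a).mp haF).2, ((hmemG a).mp haG).2⟩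
  have hunion : F ∪ G = Finset.range (2*k) := by
    apply Finset.eq_of_subset_of_card_le
    · exact Finset.union_subset (Finset.filter_subset _ _) (Finset.filter_subset _ _)
    · rw [Finset.card_union_of_disjoint hFGdisj, Finset.card_range]
      omega
  have hcompl : ∀ i, i < 2*k → (i ∈ F ↔ i ∉ G) := by
    intro i hi
    have : i ∈ F ∪ G := by rw [hunion]; exact Finset.mem_range.mpr hi
    rw [Finset.mem_union] at this
    have hdis := Finset.disjoint_left.mp hFGdisj
    constructor
    · intro hF hG; exact hdis hF hG
    · intro hG; tauto
  -- each pair {i, i+k} meets G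
  have hcover : ∀ i, i < k → (i ∈ G ∨ i + k ∈ G) := by
    intro i hi
    have himg : G.image (fun a : ℕ => if a < k then a else a - k) = Finset.range k := by
      apply Finset.eq_of_subset_of_card_le
      · intro x hx
        simp only [Finset.mem_image] at hx
        obtain ⟨a, ha, rfl⟩ := hx
        exact hGmaps a ha
      · rw [Finset.card_image_of_injOn hGinj, Finset.card_range, hGcard]
    have : i ∈ G.image (fun a : ℕ => if a < k then a else a - k) := by
      rw [himg]; exact Finset.mem_range.mpr hi
    simp only [Finset.mem_image] at this
    obtain ⟨a, ha, hai⟩ := this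
    have ha2 := ((hmemG a).mp ha).1
    split_ifs at hai with h
    · subst hai; exact Or.inl ha
    · have : a = i + k := by omega
      exact Or.inr (this ▸ ha)
  -- the pair condition for f
  have hpairF : ∀ i, i < k → (f i ↔ ¬ f (i+k)) := by
    intro i hi
    constructor
    · intro hfi hfik
      have hiF : i ∈ F := (hmemF i).mpr ⟨by omega, hfi⟩
      have hiG : i ∉ G := (hcompl i (by omega)).mp hiF
      have hikG : i + k ∈ G := (hcover i hi).resolve_left hiG
      have hgik : g (i+k) := ((hmemG (i+k)).mp hikG).2
      exact hspoke (i+k) ⟨hfik, hgik⟩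
    · intro hnf
      have hikF : i + k ∉ F := fun h => hnf ((hmemF (i+k)).mp h).2
      have hikG : i + k ∈ G := by
        by_contra h
        exact hikF ((hcompl (i+k) (by omega)).mpr h)
      have hiG : i ∉ G := fun h => hconsG i ⟨((hmemG i).mp h).2, ((hmemG (i+k)).mp hikG).2⟩
      exact ((hmemF i).mp ((hcompl i (by omega)).mpr hiG)).2
  -- apply the combinatorial core
  have h0 : f 0 := core k hke hk f (fun j _ => hconsF j) hpairF
  have hlast : f (2*k-1) := core' k hke hk f (fun j _ => hconsF j) hpairF
  have hnfk : ¬ f k := by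
    have := (hpairF 0 (by omega)).mp h0
    rwa [Nat.zero_add] at this
  have hgk : g k := by
    have hkF : k ∉ F := fun h => hnfk ((hmemF k).mp h).2
    have : k ∈ G := by
      by_contra h
      exact hkF ((hcompl k (by omega)).mpr h)
    exact ((hmemG k).mp this).2
  have hnfk1 : ¬ f (k-1) := by
    intro h
    have := (hpairF (k-1) (by omega)).mp h
    rw [show k-1+k = 2*k-1 from by omega] at this
    exact this hlast
  have hgk1 : g (k-1) := by
    have hF : k-1 ∉ F := fun h => hnfk1 ((hmemF (k-1)).mp h).2
    have : k-1 ∈ G := by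
      by_contra h
      exact hF ((hcompl (k-1) (by omega)).mpr h)
    exact ((hmemG (k-1)).mp this).2
  -- the four conclusions
  refine ⟨?_, ?_, ?_, ?_⟩
  · intro hmem
    have hadj := adj_uu_s3 (n := n) (k := k) hn1 (t + ((2*k-1 : ℕ) : ZMod n))
    have hc : t + ((2*k-1 : ℕ) : ZMod n) + 1 = t + ((2*k : ℕ) : ZMod n) := by
      rw [show (2*k) = (2*k-1)+1 from by omega]
      push_cast; ring
    rw [hc] at hadj
    exact hind _ ((hf (2*k-1)).mp hlast) _ hmem hadj
  · intro hmem
    have hadj := adj_vv_s3 (n := n) (k := k) (by omega) hkn (t + ((k : ℕ) : ZMod n))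
    have hc : t + ((k : ℕ) : ZMod n) + (k : ZMod n) = t + ((2*k : ℕ) : ZMod n) := by
      push_cast; ring
    rw [hc] at hadj
    exact hind _ ((hg k).mp hgk) _ hmem hadj
  · intro hmem
    have hadj := adj_uu_s3 (n := n) (k := k) hn1 (t - 1)
    rw [show t - 1 + 1 = t + ((0:ℕ) : ZMod n) from by push_cast; ring] at hadj
    exact hind _ hmem _ ((hf 0).mp h0) hadj
  · intro hmem
    have hadj := adj_vv_s3 (n := n) (k := k) (by omega) hkn (t - 1)
    have hc : t - 1 + ((k : ℕ) : ZMod n) = t + ((k-1 : ℕ) : ZMod n) := by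
      rw [show (k : ℕ) = (k-1)+1 from by omega]
      push_cast; ring
    rw [hc] at hadj
    exact hind _ hmem _ ((hg (k-1)).mp hgk1) hadj


end GP
end

section
/- Let k ≥ 2 be an even integer, n ≥ 3k an integer, and let S be a maximum independent set of P(n,k). Suppose the 2k-segment I_t satisfies |I_t ∩ S| = 2k−1, u_t ∉ S, and {u_t} ∪ (I_t ∩ S) is an independent set in the subgraph of P(n,k) induced by I_t. Then u_{t+2k} ∉ S and v_{t+2k} ∉ S (indices modulo n). -/
namespace GP

/-- If `S` is a maximum independent set of `P(n,k)` (`k ≥ 2` even, `n ≥ 3k`)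
and `I_t` is of Special type 2 with respect to `S` (i.e. `|I_t ∩ S| = 2k−1`, `u_t ∉ S`, and
`{u_t} ∪ (I_t ∩ S)` is independent), then `u_{t+2k} ∉ S` and `v_{t+2k} ∉ S`. -/
theorem special_type2_neighbors_not_in_S (n k : ℕ) (hke : Even k) (hk : 2 ≤ k)
    (hn : 3 * k ≤ n) (S : Finset (ZMod n ⊕ ZMod n)) (hind : IsIndep (P n k) S)
    (hmax : S.card = alpha n k) (t : ZMod n)
    (ht : (segment n k t ∩ S).card = 2 * k - 1)
    (hut : u n t ∉ S)
    (hspecial : IsIndep (P n k) (insert (u n t) (segment n k t ∩ S))) :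
    u n (t + ((2 * k : ℕ) : ZMod n)) ∉ S ∧ v n (t + ((2 * k : ℕ) : ZMod n)) ∉ S := by
  classical
  haveI : NeZero n := ⟨by omega⟩
  set T : Finset (ZMod n ⊕ ZMod n) := insert (u n t) (segment n k t ∩ S) with hTdef
  have hcast : ∀ m : ℕ, 0 < m → m < n → ((m : ZMod n)) ≠ 0 := by
    intro m hm1 hm2 h
    rw [ZMod.natCast_eq_zero_iff] at h
    exact absurd (Nat.le_of_dvd hm1 h) (by omega)
  have adj_uu : ∀ i : ZMod n, (P n k).Adj (u n i) (u n (i + 1)) := by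
    intro i
    rw [P, SimpleGraph.fromRel_adj]
    refine ⟨?_, Or.inl rfl⟩
    simp only [u, ne_eq, Sum.inl.injEq]
    intro h
    exact hcast 1 one_pos (by omega) (by exact_mod_cast left_eq_add.mp h)
  have hkne : ((k : ℕ) : ZMod n) ≠ 0 := hcast k (by omega) (by omega)
  have adj_vv : ∀ i : ZMod n, (P n k).Adj (v n i) (v n (i + (k:ZMod n))) := by
    intro i
    rw [P, SimpleGraph.fromRel_adj]
    refine ⟨?_, Or.inl rfl⟩
    simp only [v, ne_eq, Sum.inr.injEq]
    intro h
    exact hkne (left_eq_add.mp h)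
  have adj_uv : ∀ i : ZMod n, (P n k).Adj (u n i) (v n i) := by
    intro i
    rw [P, SimpleGraph.fromRel_adj]
    exact ⟨by simp [u, v], Or.inl rfl⟩
  have hT0 : u n t ∈ T := Finset.mem_insert_self _ _
  have hTS : ∀ x ∈ T, x ≠ u n t → x ∈ S := by
    intro x hx hne
    rcases Finset.mem_insert.mp hx with h | h
    · exact absurd h hne
    · exact (Finset.mem_inter.mp h).2
  have hTcard : T.card = 2*k := by
    rw [hTdef, Finset.card_insert_of_notMem, ht]
    · omega
    · intro h; exact hut (Finset.mem_inter.mp h).2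
  have hTsub : T ⊆ segment n k t := by
    intro x hx
    rcases Finset.mem_insert.mp hx with h | h
    · rw [h, show u n t = u n (t + ((0:ℕ) : ZMod n)) from by norm_num]
      exact Finset.mem_union_left _
        (Finset.mem_image_of_mem _ (Finset.mem_range.mpr (by omega)))
    · exact (Finset.mem_inter.mp h).1
  have hcol : ∀ j : ℕ, j < 2*k →
      u n (t+(j:ZMod n)) ∈ T ∨ v n (t+(j:ZMod n)) ∈ T := by
    by_contra h
    push_neg at h
    obtain ⟨j, hj, hju, hjv⟩ := h
    have hsub : T ⊆ (Finset.range (2*k)).biUnion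
        (fun i => T ∩ {u n (t+(i:ZMod n)), v n (t+(i:ZMod n))}) := by
      intro x hx
      have hxseg := hTsub hx
      simp only [segment, Finset.mem_union, Finset.mem_image, Finset.mem_range] at hxseg
      rcases hxseg with ⟨i, hi, rfl⟩ | ⟨i, hi, rfl⟩
      · exact Finset.mem_biUnion.mpr ⟨i, Finset.mem_range.mpr hi,
          Finset.mem_inter.mpr ⟨hx, Finset.mem_insert_self _ _⟩⟩
      · exact Finset.mem_biUnion.mpr ⟨i, Finset.mem_range.mpr hi,
          Finset.mem_inter.mpr ⟨hx, Finset.mem_insert.mpr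
            (Or.inr (Finset.mem_singleton_self _))⟩⟩
    have h1 : ∀ i ∈ Finset.range (2*k),
        (T ∩ {u n (t+(i:ZMod n)), v n (t+(i:ZMod n))}).card ≤ 1 := by
      intro i _
      by_contra hc
      push_neg at hc
      obtain ⟨a, ha, b, hb, hab⟩ := Finset.one_lt_card.mp hc
      obtain ⟨haT, hap⟩ := Finset.mem_inter.mp ha
      obtain ⟨hbT, hbp⟩ := Finset.mem_inter.mp hb
      simp only [Finset.mem_insert, Finset.mem_singleton] at hap hbp
      rcases hap with rfl | rfl <;> rcases hbp with rfl | rfl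
      · exact hab rfl
      · exact hspecial _ haT _ hbT (adj_uv _)
      · exact hspecial _ hbT _ haT (adj_uv _)
      · exact hab rfl
    have hlt : ∑ i ∈ Finset.range (2*k),
        (T ∩ {u n (t+(i:ZMod n)), v n (t+(i:ZMod n))}).card
        < ∑ i ∈ Finset.range (2*k), 1 := by
      apply Finset.sum_lt_sum h1
      refine ⟨j, Finset.mem_range.mpr hj, ?_⟩
      have hempty : T ∩ {u n (t+(j:ZMod n)), v n (t+(j:ZMod n))} = ∅ := by
        apply Finset.eq_empty_iff_forall_notMem.mpr
        intro x hx
        obtain ⟨hxT, hxp⟩ := Finset.mem_inter.mp hx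
        simp only [Finset.mem_insert, Finset.mem_singleton] at hxp
        rcases hxp with rfl | rfl
        · exact hju hxT
        · exact hjv hxT
      rw [hempty]
      simp
    have hge : 2*k ≤ ∑ i ∈ Finset.range (2*k),
        (T ∩ {u n (t+(i:ZMod n)), v n (t+(i:ZMod n))}).card := by
      calc 2*k = T.card := hTcard.symm
        _ ≤ _ := le_trans (Finset.card_le_card hsub) Finset.card_biUnion_le
    simp only [Finset.sum_const, Finset.card_range, smul_eq_mul, mul_one] at hlt
    exact Nat.lt_irrefl _ (lt_of_le_of_lt hge hlt)
  have hXstep : ∀ j : ℕ, u n (t+(j:ZMod n)) ∈ T →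
      u n (t+((j+1:ℕ):ZMod n)) ∈ T → False := by
    intro j h1 h2
    have e : t + ((j+1:ℕ):ZMod n) = (t + (j:ZMod n)) + 1 := by push_cast; ring
    rw [e] at h2
    exact hspecial _ h1 _ h2 (adj_uu _)
  have hVV : ∀ j : ℕ, v n (t+(j:ZMod n)) ∈ T →
      v n (t+((j+k:ℕ):ZMod n)) ∈ T → False := by
    intro j h1 h2
    have e : t + ((j+k:ℕ):ZMod n) = (t + (j:ZMod n)) + (k:ZMod n) := by push_cast; ring
    rw [e] at h2
    exact hspecial _ h1 _ h2 (adj_vv _)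
  have hpair : ∀ j : ℕ, j < k →
      u n (t+(j:ZMod n)) ∈ T ∨ u n (t+((j+k:ℕ):ZMod n)) ∈ T := by
    intro j hj
    rcases hcol j (by omega) with h | h
    · exact Or.inl h
    · rcases hcol (j+k) (by omega) with h' | h'
      · exact Or.inr h'
      · exact (hVV j h h').elim
  have main : ∀ j : ℕ, j < k →
      (Even j → u n (t+(j:ZMod n)) ∈ T) ∧
      (Odd j → u n (t+(j:ZMod n)) ∉ T ∧ u n (t+((j+k:ℕ):ZMod n)) ∈ T) := by
    intro j
    induction j with
    | zero =>
      intro _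
      refine ⟨fun _ => ?_, fun h => absurd (Nat.odd_iff.mp h) (by omega)⟩
      simpa using hT0
    | succ j ih =>
      intro hj
      obtain ⟨ihE, ihO⟩ := ih (by omega)
      constructor
      · intro hev
        have hodd : Odd j := Nat.odd_iff.mpr (by
          have := Nat.even_iff.mp hev; omega)
        obtain ⟨_, hXjk⟩ := ihO hodd
        have hnot : u n (t+((j+1+k:ℕ):ZMod n)) ∉ T := by
          intro hmem
          apply hXstep (j+k) hXjk
          have e : j + k + 1 = j + 1 + k := by omega
          rw [e]; exact hmem
        rcases hpair (j+1) hj with h | h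
        · exact h
        · exact absurd h hnot
      · intro hodd
        have hev : Even j := Nat.even_iff.mpr (by
          have := Nat.odd_iff.mp hodd; omega)
        have hXj := ihE hev
        have hnotj1 : u n (t+((j+1:ℕ):ZMod n)) ∉ T := fun h => hXstep j hXj h
        refine ⟨hnotj1, ?_⟩
        rcases hpair (j+1) hj with h | h
        · exact absurd h hnotj1
        · exact h
  have hk1odd : Odd (k-1) := Nat.odd_iff.mpr (by
    have := Nat.even_iff.mp hke; omega)
  have h2k1 : u n (t+(((k-1)+k:ℕ):ZMod n)) ∈ T := ((main (k-1) (by omega)).2 hk1odd).2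
  have h1k : u n (t+((1+k:ℕ):ZMod n)) ∈ T := ((main 1 (by omega)).2 ⟨0, by omega⟩).2
  have hXk : u n (t+((k:ℕ):ZMod n)) ∉ T := by
    intro hmem
    apply hXstep k hmem
    have e : k + 1 = 1 + k := by omega
    rw [e]; exact h1k
  have hvk : v n (t+((k:ℕ):ZMod n)) ∈ T := (hcol k (by omega)).resolve_left hXk
  have hvkS : v n (t+((k:ℕ):ZMod n)) ∈ S := hTS _ hvk (by simp [u, v])
  have hukS : u n (t+(((k-1)+k:ℕ):ZMod n)) ∈ S := by
    apply hTS _ h2k1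
    simp only [u, ne_eq, Sum.inl.injEq]
    intro h
    exact hcast ((k-1)+k) (by omega) (by omega) (add_eq_left.mp h)
  constructor
  · intro hmem
    apply hind _ hukS _ hmem
    have e : t + ((2*k:ℕ):ZMod n) = (t + (((k-1)+k:ℕ):ZMod n)) + 1 := by
      rw [show 2*k = (k-1)+k+1 from by omega]
      push_cast; ring
    rw [e]; exact adj_uu _
  · intro hmem
    apply hind _ hvkS _ hmem
    have e : t + ((2*k:ℕ):ZMod n) = (t + ((k:ℕ):ZMod n)) + (k:ZMod n) := by
      push_cast; ring
    rw [e]; exact adj_vv _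

end GP
end

section
/- For all integers n, k with n > 2k ≥ 2, every independent set S of P(n,k) and every index t satisfy |I_t ∩ S| ≤ 2k; that is, no independent set contains more than 2k vertices of any 2k-segment. -/
namespace GP

/-- For `n > 2k ≥ 2`, every independent set `S` of `P(n,k)` satisfies
`|I_t ∩ S| ≤ 2k` for every segment `I_t`. -/
theorem segment_inter_card_le (n k : ℕ) (hk : 1 ≤ k) (hn : 2 * k < n)
    (S : Finset (ZMod n ⊕ ZMod n)) (hind : IsIndep (P n k) S) (t : ZMod n) :
    (segment n k t ∩ S).card ≤ 2 * k := by
  classical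
  have hadj : ∀ i : ZMod n, (P n k).Adj (u n i) (v n i) := by
    intro i
    refine (SimpleGraph.fromRel_adj _ _ _).2 ⟨by simp [u, v], Or.inl ?_⟩
    simp [u, v, adjFun]
  have hone : ∀ j : ZMod n,
      (({u n j, v n j} : Finset (ZMod n ⊕ ZMod n)) ∩ S).card ≤ 1 := by
    intro j
    rw [Finset.card_le_one]
    intro a ha b hb
    simp only [Finset.mem_inter, Finset.mem_insert, Finset.mem_singleton] at ha hb
    obtain ⟨ha1 | ha1, ha2⟩ := ha <;> obtain ⟨hb1 | hb1, hb2⟩ := hb <;> subst ha1 <;> subst hb1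
    · rfl
    · exact absurd (hadj j) (hind _ ha2 _ hb2)
    · exact absurd (hadj j) (hind _ hb2 _ ha2)
    · rfl
  have hsub : segment n k t ∩ S ⊆ (Finset.range (2*k)).biUnion
      (fun j => ({u n (t + (j : ZMod n)), v n (t + (j : ZMod n))} :
        Finset (ZMod n ⊕ ZMod n)) ∩ S) := by
    intro x hx
    simp only [Finset.mem_inter, segment, Finset.mem_union, Finset.mem_image,
      Finset.mem_range] at hx
    obtain ⟨h1 | h1, h2⟩ := hx <;> obtain ⟨j, hj, rfl⟩ := h1 <;>
      simp only [Finset.mem_biUnion, Finset.mem_range, Finset.mem_inter,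
        Finset.mem_insert, Finset.mem_singleton]
    · exact ⟨j, hj, Or.inl rfl, h2⟩
    · exact ⟨j, hj, Or.inr rfl, h2⟩
  calc (segment n k t ∩ S).card
      ≤ _ := Finset.card_le_card hsub
    _ ≤ ∑ j ∈ Finset.range (2*k), (({u n (t + (j : ZMod n)),
          v n (t + (j : ZMod n))} : Finset (ZMod n ⊕ ZMod n)) ∩ S).card :=
        Finset.card_biUnion_le
    _ ≤ ∑ _j ∈ Finset.range (2*k), 1 :=
        Finset.sum_le_sum (fun j _ => hone _)
    _ = 2 * k := by simp


end GP
end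

section
/- Let n and k be even integers with k > 2 and n > 2k, and let r be the remainder of n modulo 2k. Then α(P(n,k)) ≥ (2k−1)⌊n/(2k)⌋ + r/2 if r ≤ k, and α(P(n,k)) ≥ (2k−1)⌊n/(2k)⌋ + 3r/2 − k − 1 if r > k. -/
namespace GP

/-! ### Auxiliary construction for the lower bound -/

/-- Arithmetic progression `T, T+2, …, T+2(m-1)` as a finset. -/
def AP (T m : ℕ) : Finset ℕ := (Finset.range m).image fun j => T + 2*j

lemma mem_AP {T m x : ℕ} : x ∈ AP T m ↔ ∃ j, j < m ∧ x = T + 2*j := by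
  constructor
  · intro h
    rw [AP, Finset.mem_image] at h
    obtain ⟨j, hj, hx⟩ := h
    exact ⟨j, Finset.mem_range.mp hj, hx.symm⟩
  · rintro ⟨j, hj, rfl⟩
    rw [AP, Finset.mem_image]
    exact ⟨j, Finset.mem_range.mpr hj, rfl⟩

lemma card_AP (T m : ℕ) : (AP T m).card = m := by
  have hinj : Function.Injective (fun j : ℕ => T + 2*j) := by
    intro a b h
    have : T + 2*a = T + 2*b := h
    omega
  rw [AP, Finset.card_image_of_injective _ hinj, Finset.card_range]

/-- Outer ("u") indices contributed by one period starting at `T`. -/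
def cellU (k T c a : ℕ) : Finset ℕ := AP T c ∪ AP (T+(k+1)) (a-1)

/-- Inner ("v") indices contributed by one period starting at `T`. -/
def cellV (k T a : ℕ) : Finset ℕ := AP (T+1) a ∪ AP (T+k) a

lemma card_cellU {k T c a : ℕ} (hk2 : k % 2 = 0) : (cellU k T c a).card = c + (a-1) := by
  have hd : Disjoint (AP T c) (AP (T+(k+1)) (a-1)) := by
    rw [Finset.disjoint_left]
    intro x hx1 hx2
    rw [mem_AP] at hx1 hx2
    obtain ⟨j1, _, h1⟩ := hx1
    obtain ⟨j2, _, h2⟩ := hx2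
    omega
  rw [cellU, Finset.card_union_of_disjoint hd, card_AP, card_AP]

lemma card_cellV {k T a : ℕ} (hk2 : k % 2 = 0) : (cellV k T a).card = a + a := by
  have hd : Disjoint (AP (T+1) a) (AP (T+k) a) := by
    rw [Finset.disjoint_left]
    intro x hx1 hx2
    rw [mem_AP] at hx1 hx2
    obtain ⟨j1, _, h1⟩ := hx1
    obtain ⟨j2, _, h2⟩ := hx2
    omega
  rw [cellV, Finset.card_union_of_disjoint hd, card_AP, card_AP]

lemma cellU_bounds {k T c a x : ℕ} (hc : 2*c ≤ 2*k) (ha2 : 2*a ≤ k+2)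
    (hx : x ∈ cellU k T c a) : T ≤ x ∧ x < T + 2*k := by
  rw [cellU, Finset.mem_union, mem_AP, mem_AP] at hx
  rcases hx with ⟨j, hj, rfl⟩ | ⟨j, hj, rfl⟩ <;> omega

lemma cellV_bounds {k T a x : ℕ} (ha : 2*a ≤ k)
    (hx : x ∈ cellV k T a) : T ≤ x ∧ x < T + 2*k := by
  rw [cellV, Finset.mem_union, mem_AP, mem_AP] at hx
  rcases hx with ⟨j, hj, rfl⟩ | ⟨j, hj, rfl⟩ <;> omega

/-- All outer indices of the independent set. -/
def Uset (k q c a : ℕ) : Finset ℕ :=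
  (Finset.range (q+1)).biUnion fun t =>
    cellU k (2*k*t) (if t < q then k/2 else c) (if t < q then k/2 else a)

/-- All inner indices of the independent set. -/
def Vset (k q a : ℕ) : Finset ℕ :=
  (Finset.range (q+1)).biUnion fun t =>
    cellV k (2*k*t) (if t < q then k/2 else a)

lemma split {K A B x y : ℕ} (h : K*A + x = K*B + y)
    (hx : x < 2*K) (hy : y < 2*K) :
    (A = B ∧ x = y) ∨ (A + 1 = B ∧ x = y + K) ∨ (B + 1 = A ∧ y = x + K) := by
  have h1 : K*(B+2) = K*B + 2*K := by ring
  have h2 : K*(A+2) = K*A + 2*K := by ring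
  have hAB : A ≤ B + 1 := by
    by_contra hcon
    have : K*(B+2) ≤ K*A := Nat.mul_le_mul_left K (by omega)
    omega
  have hBA : B ≤ A + 1 := by
    by_contra hcon
    have : K*(A+2) ≤ K*B := Nat.mul_le_mul_left K (by omega)
    omega
  rcases Nat.lt_trichotomy A B with hlt | heq | hgt
  · have hB : B = A + 1 := by omega
    subst hB
    have : K*(A+1) = K*A + K := by ring
    right; left; omega
  · subst heq; left; omega
  · have hA : A = B + 1 := by omega
    subst hA
    have : K*(B+1) = K*B + K := by ring
    right; right; omega

lemma mem_Uset_elim {k q c a x : ℕ} (hx : x ∈ Uset k q c a) :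
    ∃ t e j, x = 2*k*t + e ∧ t ≤ q ∧
      ((e = 2*j ∧ (t < q → j < k/2) ∧ (t = q → j < c)) ∨
       (e = k+1+2*j ∧ (t < q → j < k/2 - 1) ∧ (t = q → j < a - 1))) := by
  rw [Uset, Finset.mem_biUnion] at hx
  obtain ⟨t, ht, hcell⟩ := hx
  rw [Finset.mem_range] at ht
  rw [cellU, Finset.mem_union, mem_AP, mem_AP] at hcell
  rcases hcell with ⟨j, hj, hxe⟩ | ⟨j, hj, hxe⟩
  · refine ⟨t, 2*j, j, hxe, by omega, Or.inl ⟨rfl, ?_, ?_⟩⟩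
    · intro h; rwa [if_pos h] at hj
    · intro h; rwa [if_neg (by omega)] at hj
  · refine ⟨t, k+1+2*j, j, by omega, by omega, Or.inr ⟨rfl, ?_, ?_⟩⟩
    · intro h; rwa [if_pos h] at hj
    · intro h; rwa [if_neg (by omega)] at hj

lemma mem_Vset_elim {k q a x : ℕ} (hx : x ∈ Vset k q a) :
    ∃ t e j, x = 2*k*t + e ∧ t ≤ q ∧
      ((e = 1+2*j ∧ (t < q → j < k/2) ∧ (t = q → j < a)) ∨
       (e = k+2*j ∧ (t < q → j < k/2) ∧ (t = q → j < a))) := by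
  rw [Vset, Finset.mem_biUnion] at hx
  obtain ⟨t, ht, hcell⟩ := hx
  rw [Finset.mem_range] at ht
  rw [cellV, Finset.mem_union, mem_AP, mem_AP] at hcell
  rcases hcell with ⟨j, hj, hxe⟩ | ⟨j, hj, hxe⟩
  · refine ⟨t, 1+2*j, j, by omega, by omega, Or.inl ⟨rfl, ?_, ?_⟩⟩
    · intro h; rwa [if_pos h] at hj
    · intro h; rwa [if_neg (by omega)] at hj
  · refine ⟨t, k+2*j, j, by omega, by omega, Or.inr ⟨rfl, ?_, ?_⟩⟩
    · intro h; rwa [if_pos h] at hj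
    · intro h; rwa [if_neg (by omega)] at hj

lemma card_Uset {k q c a : ℕ} (hk2 : k % 2 = 0) (hc : 2*c ≤ k) (ha : 2*a ≤ k) :
    (Uset k q c a).card = q * (k-1) + (c + (a-1)) := by
  rw [Uset, Finset.card_biUnion]
  · rw [Finset.sum_range_succ, if_neg (lt_irrefl q), if_neg (lt_irrefl q)]
    have h1 : ∀ t ∈ Finset.range q,
        (cellU k (2*k*t) (if t < q then k/2 else c) (if t < q then k/2 else a)).card = k-1 := by
      intro t ht
      rw [Finset.mem_range] at ht
      rw [if_pos ht, if_pos ht, card_cellU hk2]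
      omega
    rw [Finset.sum_congr rfl h1, Finset.sum_const, Finset.card_range, smul_eq_mul,
      card_cellU hk2]
  · intro t1 h1 t2 h2 hne
    simp only [Function.onFun]
    rw [Finset.disjoint_left]
    intro x hx1 hx2
    have b1 := cellU_bounds (by split_ifs <;> omega) (by split_ifs <;> omega) hx1
    have b2 := cellU_bounds (by split_ifs <;> omega) (by split_ifs <;> omega) hx2
    rcases hne.lt_or_gt with hlt | hlt
    · have hm : 2*k*(t1+1) ≤ 2*k*t2 := Nat.mul_le_mul_left _ (by omega)
      have hm2 : 2*k*(t1+1) = 2*k*t1 + 2*k := by ring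
      omega
    · have hm : 2*k*(t2+1) ≤ 2*k*t1 := Nat.mul_le_mul_left _ (by omega)
      have hm2 : 2*k*(t2+1) = 2*k*t2 + 2*k := by ring
      omega

lemma card_Vset {k q a : ℕ} (hk2 : k % 2 = 0) (ha : 2*a ≤ k) :
    (Vset k q a).card = q * k + (a + a) := by
  rw [Vset, Finset.card_biUnion]
  · rw [Finset.sum_range_succ, if_neg (lt_irrefl q)]
    have h1 : ∀ t ∈ Finset.range q,
        (cellV k (2*k*t) (if t < q then k/2 else a)).card = k := by
      intro t ht
      rw [Finset.mem_range] at ht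
      rw [if_pos ht, card_cellV hk2]
      omega
    rw [Finset.sum_congr rfl h1, Finset.sum_const, Finset.card_range, smul_eq_mul,
      card_cellV hk2]
  · intro t1 h1 t2 h2 hne
    simp only [Function.onFun]
    rw [Finset.disjoint_left]
    intro x hx1 hx2
    have b1 := cellV_bounds (by split_ifs <;> omega) hx1
    have b2 := cellV_bounds (by split_ifs <;> omega) hx2
    rcases hne.lt_or_gt with hlt | hlt
    · have hm : 2*k*(t1+1) ≤ 2*k*t2 := Nat.mul_le_mul_left _ (by omega)
      have hm2 : 2*k*(t1+1) = 2*k*t1 + 2*k := by ring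
      omega
    · have hm : 2*k*(t2+1) ≤ 2*k*t1 := Nat.mul_le_mul_left _ (by omega)
      have hm2 : 2*k*(t2+1) = 2*k*t2 + 2*k := by ring
      omega

section Main

variable {k q r c a : ℕ} (hk4 : 4 ≤ k) (hk2 : k % 2 = 0) (hq1 : 1 ≤ q)
  (hr2 : r % 2 = 0) (hrk : r < 2*k) (ha : 2*a = r - k) (hc : 2*c = r - 2*a)

include hk4 hk2 hq1 hr2 hrk ha hc

lemma Uset_lt {x : ℕ} (hx : x ∈ Uset k q c a) : x < 2*k*q + r := by
  obtain ⟨t, e, j, hxe, htq, hsh⟩ := mem_Uset_elim hx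
  have hmono : 2*k*t ≤ 2*k*q := Nat.mul_le_mul_left _ htq
  rcases Nat.lt_or_ge t q with h | h
  · have hb : 2*k*(t+1) ≤ 2*k*q := Nat.mul_le_mul_left _ (by omega)
    have hb' : 2*k*(t+1) = 2*k*t + 2*k := by ring
    omega
  · have ht : t = q := by omega
    subst ht
    omega

lemma Vset_lt {x : ℕ} (hx : x ∈ Vset k q a) : x < 2*k*q + r := by
  obtain ⟨t, e, j, hxe, htq, hsh⟩ := mem_Vset_elim hx
  have hmono : 2*k*t ≤ 2*k*q := Nat.mul_le_mul_left _ htq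
  rcases Nat.lt_or_ge t q with h | h
  · have hb : 2*k*(t+1) ≤ 2*k*q := Nat.mul_le_mul_left _ (by omega)
    have hb' : 2*k*(t+1) = 2*k*t + 2*k := by ring
    omega
  · have ht : t = q := by omega
    subst ht
    omega

lemma noUU {i1 i2 : ℕ} (h1 : i1 ∈ Uset k q c a) (h2 : i2 ∈ Uset k q c a)
    (heq : i1 = i2 + 1 ∨ i1 + (2*k*q + r) = i2 + 1) : False := by
  obtain ⟨t1, e1, j1, hx1, ht1, hs1⟩ := mem_Uset_elim h1
  obtain ⟨t2, e2, j2, hx2, ht2, hs2⟩ := mem_Uset_elim h2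
  have he1 : e1 < 2*k := by omega
  have he2 : e2 < 2*k := by omega
  rcases heq with heq | heq
  · have h' : 2*k*t1 + e1 = 2*k*t2 + (e2+1) := by omega
    rcases split h' (by omega) (by omega) with ⟨hA, hB⟩ | ⟨hA, hB⟩ | ⟨hA, hB⟩ <;> omega
  · have hmul : 2*k*(t1+q) = 2*k*t1 + 2*k*q := by ring
    have h' : 2*k*(t1+q) + (e1+r) = 2*k*t2 + (e2+1) := by omega
    rcases split h' (by omega) (by omega) with ⟨hA, hB⟩ | ⟨hA, hB⟩ | ⟨hA, hB⟩ <;> omega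

lemma noUV {i1 i2 : ℕ} (h1 : i1 ∈ Uset k q c a) (h2 : i2 ∈ Vset k q a)
    (heq : i1 = i2) : False := by
  obtain ⟨t1, e1, j1, hx1, ht1, hs1⟩ := mem_Uset_elim h1
  obtain ⟨t2, e2, j2, hx2, ht2, hs2⟩ := mem_Vset_elim h2
  have he1 : e1 < 2*k := by omega
  have he2 : e2 < 2*k := by omega
  have h' : 2*k*t1 + e1 = 2*k*t2 + e2 := by omega
  rcases split h' (by omega) (by omega) with ⟨hA, hB⟩ | ⟨hA, hB⟩ | ⟨hA, hB⟩ <;> omega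

lemma noVV {i1 i2 : ℕ} (h1 : i1 ∈ Vset k q a) (h2 : i2 ∈ Vset k q a)
    (heq : i2 = i1 + k ∨ i2 + (2*k*q + r) = i1 + k) : False := by
  obtain ⟨t1, e1, j1, hx1, ht1, hs1⟩ := mem_Vset_elim h1
  obtain ⟨t2, e2, j2, hx2, ht2, hs2⟩ := mem_Vset_elim h2
  have he1 : e1 < 2*k := by omega
  have he2 : e2 < 2*k := by omega
  rcases heq with heq | heq
  · have h' : 2*k*t2 + e2 = 2*k*t1 + (e1+k) := by omega
    rcases split h' (by omega) (by omega) with ⟨hA, hB⟩ | ⟨hA, hB⟩ | ⟨hA, hB⟩ <;> omega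
  · have hmul : 2*k*(t2+q) = 2*k*t2 + 2*k*q := by ring
    have h' : 2*k*(t2+q) + (e2+r) = 2*k*t1 + (e1+k) := by omega
    rcases split h' (by omega) (by omega) with ⟨hA, hB⟩ | ⟨hA, hB⟩ | ⟨hA, hB⟩ <;> omega

end Main

lemma zmod_inj {n : ℕ} {i j : ℕ} (hi : i < n) (hj : j < n) (h : (i : ZMod n) = (j : ZMod n)) :
    i = j := by
  rw [ZMod.natCast_eq_natCast_iff] at h
  have h' : i % n = j % n := h
  rw [Nat.mod_eq_of_lt hi, Nat.mod_eq_of_lt hj] at h'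
  exact h'

lemma zmod_shift {n : ℕ} {i j d : ℕ} (hi : i < n) (hj : j < n) (hd : d < n)
    (h : (i : ZMod n) = (j : ZMod n) + (d : ZMod n)) : i = j + d ∨ i + n = j + d := by
  rw [← Nat.cast_add, ZMod.natCast_eq_natCast_iff] at h
  have h' : i % n = (j + d) % n := h
  rcases Nat.lt_or_ge (j+d) n with h1 | h1
  · rw [Nat.mod_eq_of_lt hi, Nat.mod_eq_of_lt h1] at h'
    omega
  · rw [Nat.mod_eq_of_lt hi, Nat.mod_eq_sub_mod h1, Nat.mod_eq_of_lt (by omega)] at h'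
    omega

/-- For even `n` and even `k > 2` with `n > 2k`, writing `r = n mod 2k`,
`α(P(n,k)) ≥ (2k−1)⌊n/(2k)⌋ + r/2` if `r ≤ k`, and
`α(P(n,k)) ≥ (2k−1)⌊n/(2k)⌋ + 3r/2 − k − 1` if `r > k`. -/
theorem alpha_lower_bound_even_even (n k : ℕ) (hne : Even n) (hke : Even k)
    (hk : 2 < k) (hn : 2 * k < n) (r : ℕ) (hr : r = n % (2 * k)) :
    (r ≤ k → (2 * k - 1) * (n / (2 * k)) + r / 2 ≤ alpha n k) ∧
    (k < r → (2 * k - 1) * (n / (2 * k)) + (3 * r / 2 - k - 1) ≤ alpha n k) := by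
  have hk2 : k % 2 = 0 := Nat.even_iff.mp hke
  have hn2 : n % 2 = 0 := Nat.even_iff.mp hne
  have hk4 : 4 ≤ k := by omega
  set q := n / (2*k) with hqdef
  have hdm : 2*k*q + r = n := by
    rw [hqdef, hr]; exact Nat.div_add_mod n (2*k)
  have hrk : r < 2*k := by
    rw [hr]; exact Nat.mod_lt _ (by omega)
  have hq1 : 1 ≤ q := by
    rw [hqdef]
    exact (Nat.one_le_div_iff (by omega)).mpr (by omega)
  have hr2 : r % 2 = 0 := by
    have h2 : 2*k*q = 2*(k*q) := by ring
    omega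
  set a := (r - k)/2 with hadef
  set c := r/2 - a with hcdef
  have ha : 2*a = r - k := by omega
  have hc : 2*c = r - 2*a := by omega
  haveI : NeZero n := ⟨by omega⟩
  -- the independent set
  set S : Finset (ZMod n ⊕ ZMod n) :=
    ((Uset k q c a).image fun i => Sum.inl ((i : ℕ) : ZMod n)) ∪
    ((Vset k q a).image fun i => Sum.inr ((i : ℕ) : ZMod n)) with hS
  have hUlt : ∀ {x : ℕ}, x ∈ Uset k q c a → x < n := by
    intro x hx
    have := Uset_lt hk4 hk2 hq1 hr2 hrk ha hc hx
    omega
  have hVlt : ∀ {x : ℕ}, x ∈ Vset k q a → x < n := by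
    intro x hx
    have := Vset_lt hk4 hk2 hq1 hr2 hrk ha hc hx
    omega
  -- independence
  have hindep : IsIndep (P n k) S := by
    intro x hx y hy hadj
    rw [P, SimpleGraph.fromRel_adj] at hadj
    obtain ⟨hxy, hrel⟩ := hadj
    rw [hS, Finset.mem_union] at hx hy
    rcases hx with hx | hx <;> rcases hy with hy | hy
    · obtain ⟨i1, hi1, rfl⟩ := Finset.mem_image.mp hx
      obtain ⟨i2, hi2, rfl⟩ := Finset.mem_image.mp hy
      rcases hrel with h | h
      · replace h : ((i2 : ℕ) : ZMod n) = ((i1 : ℕ) : ZMod n) + 1 := h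
        rw [← Nat.cast_one (R := ZMod n)] at h
        have := zmod_shift (hUlt hi2) (hUlt hi1) (by omega) h
        exact noUU hk4 hk2 hq1 hr2 hrk ha hc hi2 hi1 (by omega)
      · replace h : ((i1 : ℕ) : ZMod n) = ((i2 : ℕ) : ZMod n) + 1 := h
        rw [← Nat.cast_one (R := ZMod n)] at h
        have := zmod_shift (hUlt hi1) (hUlt hi2) (by omega) h
        exact noUU hk4 hk2 hq1 hr2 hrk ha hc hi1 hi2 (by omega)
    · obtain ⟨i1, hi1, rfl⟩ := Finset.mem_image.mp hx
      obtain ⟨i2, hi2, rfl⟩ := Finset.mem_image.mp hy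
      rcases hrel with h | h
      · replace h : ((i2 : ℕ) : ZMod n) = ((i1 : ℕ) : ZMod n) := h
        have := zmod_inj (hVlt hi2) (hUlt hi1) h
        exact noUV hk4 hk2 hq1 hr2 hrk ha hc hi1 hi2 this.symm
      · exact h
    · obtain ⟨i1, hi1, rfl⟩ := Finset.mem_image.mp hx
      obtain ⟨i2, hi2, rfl⟩ := Finset.mem_image.mp hy
      rcases hrel with h | h
      · exact h
      · replace h : ((i1 : ℕ) : ZMod n) = ((i2 : ℕ) : ZMod n) := h
        have := zmod_inj (hVlt hi1) (hUlt hi2) h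
        exact noUV hk4 hk2 hq1 hr2 hrk ha hc hi2 hi1 this.symm
    · obtain ⟨i1, hi1, rfl⟩ := Finset.mem_image.mp hx
      obtain ⟨i2, hi2, rfl⟩ := Finset.mem_image.mp hy
      rcases hrel with h | h
      · replace h : ((i2 : ℕ) : ZMod n) = ((i1 : ℕ) : ZMod n) + ((k : ℕ) : ZMod n) := h
        have := zmod_shift (hVlt hi2) (hVlt hi1) (by omega) h
        exact noVV hk4 hk2 hq1 hr2 hrk ha hc hi1 hi2 (by omega)
      · replace h : ((i1 : ℕ) : ZMod n) = ((i2 : ℕ) : ZMod n) + ((k : ℕ) : ZMod n) := h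
        have := zmod_shift (hVlt hi1) (hVlt hi2) (by omega) h
        exact noVV hk4 hk2 hq1 hr2 hrk ha hc hi2 hi1 (by omega)
  -- cardinality
  have hcard : S.card = (q * (k-1) + (c + (a-1))) + (q * k + (a + a)) := by
    rw [hS]
    rw [Finset.card_union_of_disjoint]
    · rw [Finset.card_image_of_injOn, Finset.card_image_of_injOn,
        card_Uset hk2 (by omega) (by omega), card_Vset hk2 (by omega)]
      · intro x hx y hy hxy
        exact zmod_inj (hVlt hx) (hVlt hy) (Sum.inr.inj hxy)
      · intro x hx y hy hxy
        exact zmod_inj (hUlt hx) (hUlt hy) (Sum.inl.inj hxy)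
    · rw [Finset.disjoint_left]
      rintro z hz1 hz2
      obtain ⟨i1, _, rfl⟩ := Finset.mem_image.mp hz1
      obtain ⟨i2, _, h⟩ := Finset.mem_image.mp hz2
      exact absurd h.symm (by simp)
  have hle : S.card ≤ alpha n k := by
    apply le_csSup
    · refine ⟨Fintype.card (ZMod n ⊕ ZMod n), ?_⟩
      rintro m ⟨s, _, rfl⟩
      exact le_trans (Finset.card_le_univ s) (le_of_eq Finset.card_univ)
    · exact ⟨S, hindep, rfl⟩
  have hbridge : (2*k-1)*q = q*(k-1) + q*k := by
    have h2 : 2*k-1 = (k-1)+k := by omega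
    rw [h2, add_mul]
    ring
  constructor
  · intro hrle
    have : (2*k-1)*q + r/2 ≤ S.card := by
      rw [hcard]
      omega
    omega
  · intro hrgt
    have : (2*k-1)*q + (3*r/2 - k - 1) ≤ S.card := by
      rw [hcard]
      omega
    omega

end GP
end

section
/- Let n be an odd integer and k > 2 an even integer with n > 2k, and let r be the remainder of n modulo 2k (so r is odd and r ≠ 0, k). Then α(P(n,k)) ≥ (2k−1)⌊n/(2k)⌋ + c, where c = −k/2 + 2 if r = 1, c = (3r−k−1)/2 if 1 < r < k, and c = k/2 + (r−1)/2 if k < r < 2k. -/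
set_option maxHeartbeats 1000000


namespace GP

def patP (k c : ℕ) : ℕ :=
  if c = 2*k-1 then 0
  else if c < k then (if c % 2 = 0 then 1 else 2)
  else (if c % 2 = 0 then 2 else 1)

def patF (k r y : ℕ) : ℕ :=
  if r = 1 then
    (if y < k then (if y % 2 = 0 then 1 else 2)
     else if y = k then 2
     else if y % 2 = 1 then 1 else 0)
  else if r < k then
    (if y < k then (if y % 2 = 0 then 1 else 2)
     else if y = k then 2
     else if y < k + r then (if y % 2 = 1 then 1 else 2)
     else if y = k + r then 0
     else if y < 2*k then (if y % 2 = 0 then 1 else 0)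
     else if y < 2*k + r - 1 then (if y % 2 = 0 then 1 else 2)
     else 0)
  else
    (if y < k then (if y % 2 = 0 then 1 else 2)
     else if y < 2*k then (if y % 2 = 0 then 2 else 1)
     else if y = 2*k then 0
     else if y < 3*k then (if y % 2 = 1 then 2 else 1)
     else if y = 3*k then 0
     else if y < 2*k + r then (if y % 2 = 1 then 1 else 0)
     else 0)

def pat (k r m x : ℕ) : ℕ :=
  if x < m then patP k (x % (2*k)) else patF k r (x - m)

section lemmas
variable {k r c y : ℕ}

lemma patP_ne_iff (hk : 4 ≤ k) (hc : c < 2*k) : patP k c ≠ 0 ↔ c ≠ 2*k-1 := by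
  simp only [patP]; split_ifs <;> omega

lemma P1 (hke : k % 2 = 0) (hc : c + 1 < 2*k) (h : patP k c = 1) :
    patP k (c+1) ≠ 1 := by
  simp only [patP] at h ⊢; split_ifs at h ⊢ <;> omega

lemma P2 (hke : k % 2 = 0) (hc : c < k) (h : patP k c = 2) : patP k (c+k) ≠ 2 := by
  simp only [patP] at h ⊢; split_ifs at h ⊢ <;> omega

lemma P3 (hc1 : k ≤ c) (hc2 : c < 2*k) (h : patP k c = 2) : c % 2 = 0 := by
  simp only [patP] at h; split_ifs at h <;> omega

lemma P7 (hk : 4 ≤ k) (hc : c < k) (hev : c % 2 = 0) : patP k c = 1 := by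
  simp only [patP]; split_ifs <;> omega

lemma P0 (hk : 4 ≤ k) : patP k (2*k-1) = 0 := by
  simp only [patP]; split_ifs <;> omega

section F
variable (hk : 4 ≤ k) (hke : k % 2 = 0) (hro : r % 2 = 1) (hrk : r ≠ k) (hr2 : r < 2*k)
include hk hke hro hrk hr2

lemma patF_one_iff :
    patF k r y = 1 ↔
      ((y < k ∧ y % 2 = 0) ∨
       (r = 1 ∧ k < y ∧ y % 2 = 1) ∨
       (1 < r ∧ r < k ∧ ((k < y ∧ y < k + r ∧ y % 2 = 1) ∨
          (k + r < y ∧ y < 2*k ∧ y % 2 = 0) ∨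
          (2*k ≤ y ∧ y < 2*k + r - 1 ∧ y % 2 = 0))) ∨
       (k < r ∧ ((k ≤ y ∧ y < 2*k ∧ y % 2 = 1) ∨
          (2*k < y ∧ y < 3*k ∧ y % 2 = 0) ∨
          (3*k < y ∧ y < 2*k + r ∧ y % 2 = 1)))) := by
  simp only [patF]; split_ifs <;> first | omega | (rw [false_iff]; omega)

lemma patF_two_iff :
    patF k r y = 2 ↔
      ((y < k ∧ y % 2 = 1) ∨
       (r = 1 ∧ y = k) ∨
       (1 < r ∧ r < k ∧ (y = k ∨ (k < y ∧ y < k + r ∧ y % 2 = 0) ∨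
          (2*k ≤ y ∧ y < 2*k + r - 1 ∧ y % 2 = 1))) ∨
       (k < r ∧ ((k ≤ y ∧ y < 2*k ∧ y % 2 = 0) ∨
          (2*k < y ∧ y < 3*k ∧ y % 2 = 1)))) := by
  simp only [patF]; split_ifs <;> first | omega | (rw [false_iff]; omega)

lemma F1 (h1 : y + 1 < 2*k + r) (h : patF k r y = 1) : patF k r (y+1) ≠ 1 := by
  simp only [ne_eq, patF_one_iff hk hke hro hrk hr2] at h ⊢; omega

lemma F2 (h1 : y + k < 2*k + r) (h : patF k r y = 2) : patF k r (y+k) ≠ 2 := by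
  simp only [ne_eq, patF_two_iff hk hke hro hrk hr2] at h ⊢; omega

lemma F3 (h1 : k + r ≤ y) (h2 : y < 2*k + r) (h : patF k r y = 2) : y % 2 = 1 := by
  rw [patF_two_iff hk hke hro hrk hr2] at h; omega

lemma F4 : patF k r (2*k + r - 1) ≠ 1 := by
  simp only [ne_eq, patF_one_iff hk hke hro hrk hr2]; omega

lemma F5 (hy : y < k) (hev : y % 2 = 0) : patF k r y = 1 := by
  rw [patF_one_iff hk hke hro hrk hr2]; omega

end F
end lemmas

section main
variable {k r q' x : ℕ}
variable (hk : 4 ≤ k) (hke : k % 2 = 0) (hro : r % 2 = 1) (hrk : r ≠ k) (hr2 : r < 2*k)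
include hk hke hro hrk hr2

lemma LU (hx : x < 2*k*q' + (2*k + r)) (h : pat k r (2*k*q') x = 1) :
    pat k r (2*k*q') ((x+1) % (2*k*q' + (2*k + r))) ≠ 1 := by
  set m := 2*k*q' with hm
  set n := 2*k*q' + (2*k + r) with hn
  have hk0 : 0 < 2*k := by omega
  by_cases hlast : x + 1 = n
  · have hxm : ¬ x < m := by omega
    rw [pat, if_neg hxm] at h
    have hxe : x - m = 2*k + r - 1 := by omega
    rw [hxe] at h
    exact absurd h (F4 hk hke hro hrk hr2)
  · have hmod : (x+1) % n = x + 1 := Nat.mod_eq_of_lt (by omega)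
    rw [hmod]
    by_cases hxm : x < m
    · rw [pat, if_pos hxm] at h
      set c := x % (2*k) with hc
      have hclt : c < 2*k := Nat.mod_lt _ hk0
      have hdm : 2*k*(x / (2*k)) + c = x := Nat.div_add_mod x (2*k)
      by_cases hc1 : c = 2*k-1
      · rw [hc1, P0 hk] at h; exact absurd h (by omega)
      · have hmod2 : (x+1) % (2*k) = c + 1 := by
          have h1 : x + 1 = 2*k*(x/(2*k)) + (c+1) := by omega
          rw [h1, Nat.mul_add_mod]
          exact Nat.mod_eq_of_lt (by omega)
        have hne : x + 1 ≠ m := by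
          intro he
          have h0 : (x+1) % (2*k) = 0 := by rw [he, hm]; exact Nat.mul_mod_right _ _
          omega
        have hx1m : x + 1 < m := by omega
        rw [pat, if_pos hx1m, hmod2]
        exact P1 hke (by omega) h
    · rw [pat, if_neg hxm] at h
      have hxm' : ¬ x + 1 < m := by omega
      rw [pat, if_neg hxm']
      have he : x + 1 - m = (x - m) + 1 := by omega
      rw [he]
      exact F1 hk hke hro hrk hr2 (by omega) h

lemma LV (hx : x < 2*k*q' + (2*k + r)) (h : pat k r (2*k*q') x = 2) :
    pat k r (2*k*q') ((x+k) % (2*k*q' + (2*k + r))) ≠ 2 := by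
  set m := 2*k*q' with hm
  set n := 2*k*q' + (2*k + r) with hn
  have hk0 : 0 < 2*k := by omega
  have hm2 : m % 2 = 0 := by
    have h2 : m = 2*(k*q') := by rw [hm]; ring
    omega
  by_cases hw : x + k < n
  · have hmod : (x+k) % n = x + k := Nat.mod_eq_of_lt hw
    rw [hmod]
    by_cases hxm : x < m
    · rw [pat, if_pos hxm] at h
      set c := x % (2*k) with hc
      have hclt : c < 2*k := Nat.mod_lt _ hk0
      set t := x / (2*k) with ht
      have hdm : 2*k*t + c = x := Nat.div_add_mod x (2*k)
      have htq : t < q' := by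
        by_contra hle
        push_neg at hle
        have : 2*k*q' ≤ 2*k*t := Nat.mul_le_mul_left _ hle
        omega
      have ht1 : 2*k*(t+1) ≤ 2*k*q' := Nat.mul_le_mul_left _ (by omega)
      have hmul : 2*k*(t+1) = 2*k*t + 2*k := by ring
      by_cases hck : c < k
      · have hx2 : x + k < m := by omega
        have hmod2 : (x+k) % (2*k) = c + k := by
          have h1 : x + k = 2*k*t + (c+k) := by omega
          rw [h1, Nat.mul_add_mod]
          exact Nat.mod_eq_of_lt (by omega)
        rw [pat, if_pos hx2, hmod2]
        exact P2 hke hck h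
      · push_neg at hck
        have hceven : c % 2 = 0 := P3 hck hclt h
        by_cases hx2 : x + k < m
        · have hmod2 : (x+k) % (2*k) = c - k := by
            have h1 : x + k = 2*k*(t+1) + (c-k) := by omega
            rw [h1, Nat.mul_add_mod]
            exact Nat.mod_eq_of_lt (by omega)
          rw [pat, if_pos hx2, hmod2]
          have := P7 hk (c := c - k) (by omega) (by omega)
          omega
        · rw [pat, if_neg hx2]
          have hx2' : x % 2 = c % 2 := by
            have hxe : x = 2*(k*t) + c := by rw [← hdm]; ring
            omega
          have hz : x + k - m < k := by omega
          have hzev : (x + k - m) % 2 = 0 := by omega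
          have := F5 hk hke hro hrk hr2 (y := x + k - m) hz hzev
          omega
    · rw [pat, if_neg hxm] at h
      push_neg at hxm
      have hxm' : ¬ x + k < m := by omega
      rw [pat, if_neg hxm']
      have he : x + k - m = (x - m) + k := by omega
      rw [he]
      exact F2 hk hke hro hrk hr2 (by omega) h
  · push_neg at hw
    have hxm : ¬ x < m := by omega
    rw [pat, if_neg hxm] at h
    have hyo : (x - m) % 2 = 1 := F3 hk hke hro hrk hr2 (by omega) (by omega) h
    have hzn : (x + k) % n = x + k - n := by
      have h1 : (x + k) % n = (x + k - n) % n := Nat.mod_eq_sub_mod (by omega)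
      rw [h1]
      apply Nat.mod_eq_of_lt
      omega
    rw [hzn]
    have hzk : x + k - n < k := by omega
    have hzev : (x + k - n) % 2 = 0 := by omega
    by_cases hq0 : m = 0
    · rw [pat, if_neg (by omega)]
      have h5 := F5 hk hke hro hrk hr2 (y := x + k - n - m) (by omega) (by omega)
      omega
    · have hq1 : 1 ≤ q' := by
        by_contra hq
        push_neg at hq
        interval_cases q' <;> simp_all
      have hmk : 2*k*1 ≤ 2*k*q' := Nat.mul_le_mul_left _ hq1
      have hzm : x + k - n < m := by omega
      rw [pat, if_pos hzm, Nat.mod_eq_of_lt (by omega)]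
      have := P7 hk hzk hzev
      omega

end main

section counting
open Finset

lemma card_shift (p : ℕ → Prop) [DecidablePred p] (a b : ℕ) :
    ((range (a+b)).filter p).card
      = ((range a).filter p).card + ((range b).filter (fun x => p (a+x))).card := by
  rw [range_add, filter_union, card_union_of_disjoint, filter_map, card_map]
  · rfl
  · refine disjoint_left.mpr ?_
    intro z hz hz2
    simp only [mem_filter, mem_range, mem_map, addLeftEmbedding_apply] at hz hz2
    obtain ⟨⟨y, hy, rfl⟩, -⟩ := hz2
    omega

lemma count_all {p : ℕ → Prop} [DecidablePred p] {L : ℕ} (h : ∀ x < L, p x) :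
    ((range L).filter p).card = L := by
  rw [filter_true_of_mem (fun x hx => h x (mem_range.mp hx)), card_range]

lemma count_none {p : ℕ → Prop} [DecidablePred p] {L : ℕ} (h : ∀ x < L, ¬ p x) :
    ((range L).filter p).card = 0 := by
  rw [filter_false_of_mem (fun x hx => h x (mem_range.mp hx)), card_empty]

lemma count_even_aux (L : ℕ) :
    ((range L).filter (fun x => x % 2 = 0)).card = (L+1)/2 := by
  induction L with
  | zero => simp
  | succ n ih =>
    rw [range_add_one, filter_insert]
    split_ifs with h
    · rw [card_insert_of_notMem (by simp), ih]; omega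
    · rw [ih]; omega

lemma count_even {p : ℕ → Prop} [DecidablePred p] {L : ℕ}
    (h : ∀ x < L, (p x ↔ x % 2 = 0)) :
    ((range L).filter p).card = (L+1)/2 := by
  rw [filter_congr (fun x hx => h x (mem_range.mp hx)), count_even_aux]

end counting

section counts2
open Finset
variable {k r a b s q' : ℕ}

lemma patF_le (k r y : ℕ) : patF k r y ≤ 2 := by
  simp only [patF]; split_ifs <;> omega

section F2'
variable (hk : 4 ≤ k) (hke : k % 2 = 0) (hro : r % 2 = 1) (hrk : r ≠ k) (hr2 : r < 2*k)
include hk hke hro hrk hr2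

lemma patF_ne_iff' (y : ℕ) :
    patF k r y ≠ 0 ↔
      (((y < k ∧ y % 2 = 0) ∨
       (r = 1 ∧ k < y ∧ y % 2 = 1) ∨
       (1 < r ∧ r < k ∧ ((k < y ∧ y < k + r ∧ y % 2 = 1) ∨
          (k + r < y ∧ y < 2*k ∧ y % 2 = 0) ∨
          (2*k ≤ y ∧ y < 2*k + r - 1 ∧ y % 2 = 0))) ∨
       (k < r ∧ ((k ≤ y ∧ y < 2*k ∧ y % 2 = 1) ∨
          (2*k < y ∧ y < 3*k ∧ y % 2 = 0) ∨
          (3*k < y ∧ y < 2*k + r ∧ y % 2 = 1)))) ∨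
      ((y < k ∧ y % 2 = 1) ∨
       (r = 1 ∧ y = k) ∨
       (1 < r ∧ r < k ∧ (y = k ∨ (k < y ∧ y < k + r ∧ y % 2 = 0) ∨
          (2*k ≤ y ∧ y < 2*k + r - 1 ∧ y % 2 = 1))) ∨
       (k < r ∧ ((k ≤ y ∧ y < 2*k ∧ y % 2 = 0) ∨
          (2*k < y ∧ y < 3*k ∧ y % 2 = 1))))) := by
  have h1 := patF_one_iff hk hke hro hrk hr2 (y := y)
  have h2 := patF_two_iff hk hke hro hrk hr2 (y := y)
  have h3 := patF_le k r y
  generalize hv : patF k r y = v at h1 h2 h3 ⊢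
  constructor
  · intro h0
    have hv12 : v = 1 ∨ v = 2 := by clear h1 h2; omega
    rcases hv12 with h | h
    · exact Or.inl (h1.mp h)
    · exact Or.inr (h2.mp h)
  · rintro (hh | hh)
    · rw [h1.mpr hh]; exact one_ne_zero
    · rw [h2.mpr hh]; exact two_ne_zero

lemma cardF1 (ha : k = 2*a) (hr1 : r = 1) :
    ((range (2*k + r)).filter (fun y => patF k r y ≠ 0)).card = 3*a + 1 := by
  have hd : 2*k + r = k + (1 + 2*a) := by omega
  rw [hd, card_shift, card_shift]
  rw [count_all (fun x hx => by rw [Ne, ← ne_eq, patF_ne_iff' hk hke hro hrk hr2]; omega)]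
  rw [count_all (L := 1) (fun x hx => by rw [Ne, ← ne_eq, patF_ne_iff' hk hke hro hrk hr2]; omega)]
  rw [count_even (fun x hx => by rw [Ne, ← ne_eq, patF_ne_iff' hk hke hro hrk hr2]; omega)]
  omega

lemma cardF2 (ha : k = 2*a) (hb : r = 2*b + 1) (hb1 : 1 ≤ b) (hab : b < a) :
    ((range (2*k + r)).filter (fun y => patF k r y ≠ 0)).card = 3*a + 3*b := by
  have hd : 2*k + r = k + (1 + (2*b + (1 + ((2*a - 2*b - 2) + (2*b + 1))))) := by omega
  rw [hd, card_shift, card_shift, card_shift, card_shift, card_shift, card_shift]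
  rw [count_all (fun x hx => by rw [Ne, ← ne_eq, patF_ne_iff' hk hke hro hrk hr2]; omega)]
  rw [count_all (L := 1) (fun x hx => by rw [Ne, ← ne_eq, patF_ne_iff' hk hke hro hrk hr2]; omega)]
  rw [count_all (L := 2*b) (fun x hx => by rw [Ne, ← ne_eq, patF_ne_iff' hk hke hro hrk hr2]; omega)]
  rw [count_none (L := 1) (fun x hx => by rw [Ne, ← ne_eq, patF_ne_iff' hk hke hro hrk hr2]; omega)]
  rw [count_even (fun x hx => by rw [Ne, ← ne_eq, patF_ne_iff' hk hke hro hrk hr2]; omega)]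
  rw [count_all (L := 2*b) (fun x hx => by rw [Ne, ← ne_eq, patF_ne_iff' hk hke hro hrk hr2]; omega)]
  rw [count_none (L := 1) (fun x hx => by rw [Ne, ← ne_eq, patF_ne_iff' hk hke hro hrk hr2]; omega)]
  omega

lemma cardF3 (ha : k = 2*a) (hs : r = 2*a + 1 + 2*s) (hsa : s < a) :
    ((range (2*k + r)).filter (fun y => patF k r y ≠ 0)).card = 6*a - 1 + s := by
  have hd : 2*k + r = k + (k + (1 + ((2*a - 1) + (1 + 2*s)))) := by omega
  rw [hd, card_shift, card_shift, card_shift, card_shift, card_shift]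
  rw [count_all (fun x hx => by rw [Ne, ← ne_eq, patF_ne_iff' hk hke hro hrk hr2]; omega)]
  rw [count_all (L := k) (fun x hx => by rw [Ne, ← ne_eq, patF_ne_iff' hk hke hro hrk hr2]; omega)]
  rw [count_none (L := 1) (fun x hx => by rw [Ne, ← ne_eq, patF_ne_iff' hk hke hro hrk hr2]; omega)]
  rw [count_all (L := 2*a - 1) (fun x hx => by rw [Ne, ← ne_eq, patF_ne_iff' hk hke hro hrk hr2]; omega)]
  rw [count_none (L := 1) (fun x hx => by rw [Ne, ← ne_eq, patF_ne_iff' hk hke hro hrk hr2]; omega)]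
  rw [count_even (fun x hx => by rw [Ne, ← ne_eq, patF_ne_iff' hk hke hro hrk hr2]; omega)]
  omega

end F2'

lemma card_block (hk : 4 ≤ k) :
    ∀ t, ((range (2*k*t)).filter (fun x => patP k (x % (2*k)) ≠ 0)).card = t * (2*k-1) := by
  intro t
  induction t with
  | zero => simp
  | succ t ih =>
    have hd : 2*k*(t+1) = 2*k*t + 2*k := by ring
    rw [hd, card_shift, ih]
    have hcongr : ∀ x ∈ range (2*k),
        (patP k ((2*k*t + x) % (2*k)) ≠ 0) ↔ ¬ (x = 2*k - 1) := by
      intro x hx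
      rw [Nat.mul_add_mod, Nat.mod_eq_of_lt (mem_range.mp hx)]
      exact patP_ne_iff hk (mem_range.mp hx)
    rw [filter_congr hcongr]
    have : (range (2*k)).filter (fun x => ¬ (x = 2*k-1)) = range (2*k - 1) := by
      ext z
      simp only [mem_filter, mem_range]
      omega
    rw [this, card_range]
    have hK : (t+1) * (2*k-1) = t * (2*k-1) + (2*k-1) := by ring
    omega

lemma card_total (hk : 4 ≤ k) :
    ((range (2*k*q' + (2*k + r))).filter (fun x => pat k r (2*k*q') x ≠ 0)).card
      = q' * (2*k-1) + ((range (2*k + r)).filter (fun y => patF k r y ≠ 0)).card := by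
  rw [card_shift]
  congr 1
  · rw [filter_congr (q := fun x => patP k (x % (2*k)) ≠ 0)
      (fun x hx => by rw [pat, if_pos (mem_range.mp hx)])]
    exact card_block hk q'
  · rw [filter_congr (q := fun x => patF k r x ≠ 0)
      (fun x hx => by rw [pat, if_neg (by omega), Nat.add_sub_cancel_left])]

end counts2

lemma patP_le (k c : ℕ) : patP k c ≤ 2 := by
  simp only [patP]; split_ifs <;> omega

lemma pat_le (k r m x : ℕ) : pat k r m x ≤ 2 := by
  simp only [pat]; split_ifs
  · exact patP_le _ _
  · exact patF_le _ _ _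


/-- For odd `n` and even `k > 2` with `n > 2k`, writing `r = n mod 2k`,
`α(P(n,k)) ≥ (2k−1)⌊n/(2k)⌋ + c`, where `c = −k/2 + 2` if `r = 1`,
`c = (3r−k−1)/2` if `1 < r < k`, and `c = k/2 + (r−1)/2` if `k < r < 2k`. -/
theorem alpha_lower_bound_odd_even (n k : ℕ) (hno : Odd n) (hke : Even k)
    (hk : 2 < k) (hn : 2 * k < n) (r : ℕ) (hr : r = n % (2 * k)) (c : ℤ)
    (hc1 : r = 1 → c = -(k : ℤ) / 2 + 2)
    (hc2 : 1 < r → r < k → c = (3 * (r : ℤ) - k - 1) / 2)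
    (hc3 : k < r → c = (k : ℤ) / 2 + ((r : ℤ) - 1) / 2) :
    (2 * (k : ℤ) - 1) * ((n / (2 * k) : ℕ) : ℤ) + c ≤ (alpha n k : ℤ) := by

  classical
  have hke2 : k % 2 = 0 := Nat.even_iff.mp hke
  obtain ⟨a, ha⟩ : ∃ a, k = 2*a := ⟨k/2, by omega⟩
  have hk4 : 4 ≤ k := by omega
  have hq1 : 1 ≤ n / (2*k) := (Nat.one_le_div_iff (by omega)).mpr (le_of_lt hn)
  obtain ⟨q', hq'⟩ : ∃ q', n / (2*k) = q' + 1 := ⟨n/(2*k) - 1, by omega⟩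
  have hdm0 : 2*k*(n/(2*k)) + n % (2*k) = n := Nat.div_add_mod n (2*k)
  have hr2 : r < 2*k := by rw [hr]; exact Nat.mod_lt _ (by omega)
  have hmul : 2*k*(q'+1) = 2*k*q' + 2*k := by ring
  have hne : n = 2*k*q' + (2*k + r) := by
    rw [hq', hmul] at hdm0
    rw [hr]
    omega
  have hro : r % 2 = 1 := by
    have hn2 : n % 2 = 1 := Nat.odd_iff.mp hno
    have h20 : (2*k*q') % 2 = 0 := by
      have h2 : 2*k*q' = 2*(k*q') := by ring
      omega
    omega
  have hrk : r ≠ k := by omega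
  subst hne
  set m := 2*k*q' with hm
  set n := 2*k*q' + (2*k + r) with hn'
  haveI : NeZero n := ⟨by omega⟩
  -- the independent set
  set S : Finset (ZMod n ⊕ ZMod n) :=
    ((Finset.range n).filter (fun x => pat k r m x = 1)).image
        (fun x : ℕ => (Sum.inl ((x : ℕ) : ZMod n) : ZMod n ⊕ ZMod n)) ∪
      ((Finset.range n).filter (fun x => pat k r m x = 2)).image
        (fun x : ℕ => (Sum.inr ((x : ℕ) : ZMod n) : ZMod n ⊕ ZMod n)) with hS
  have hcast : ∀ x y d : ℕ, y < n → ((y : ZMod n) = (x : ZMod n) + (d : ZMod n)) →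
      y = (x + d) % n := by
    intro x y d hy hE
    have hv := congrArg ZMod.val hE
    rw [ZMod.val_cast_of_lt hy, ← Nat.cast_add, ZMod.val_natCast] at hv
    exact hv
  -- independence
  have hindep : IsIndep (P n k) S := by
    intro v hv w hw hadj
    rw [P, SimpleGraph.fromRel_adj] at hadj
    obtain ⟨hvw, hcase⟩ := hadj
    simp only [hS, Finset.mem_union, Finset.mem_image, Finset.mem_filter,
      Finset.mem_range] at hv hw
    rcases hv with ⟨x, ⟨hxn, hx1⟩, rfl⟩ | ⟨x, ⟨hxn, hx1⟩, rfl⟩ <;>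
      rcases hw with ⟨y, ⟨hyn, hy1⟩, rfl⟩ | ⟨y, ⟨hyn, hy1⟩, rfl⟩ <;>
      simp only [adjFun] at hcase
    · -- inl x, inl y
      rcases hcase with h | h
      · have h1 : (y : ZMod n) = (x : ZMod n) + ((1:ℕ) : ZMod n) := by
          rw [h]; norm_num
        have := hcast x y 1 hyn h1
        exact LU hk4 hke2 hro hrk hr2 hxn hx1 (this ▸ hy1)
      · have h1 : (x : ZMod n) = (y : ZMod n) + ((1:ℕ) : ZMod n) := by
          rw [h]; norm_num
        have := hcast y x 1 hxn h1
        exact LU hk4 hke2 hro hrk hr2 hyn hy1 (this ▸ hx1)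
    · -- inl x, inr y
      rcases hcase with h | h
      · have h1 : (y : ZMod n) = (x : ZMod n) + ((0:ℕ) : ZMod n) := by
          rw [h]; norm_num
        have h2 := hcast x y 0 hyn h1
        rw [Nat.add_zero, Nat.mod_eq_of_lt hxn] at h2
        have : y = x := h2
        subst this
        omega
      · exact h
    · -- inr x, inl y
      rcases hcase with h | h
      · exact h
      · have h1 : (x : ZMod n) = (y : ZMod n) + ((0:ℕ) : ZMod n) := by
          rw [h]; norm_num
        have h2 := hcast y x 0 hxn h1
        rw [Nat.add_zero, Nat.mod_eq_of_lt hyn] at h2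
        have : x = y := h2
        subst this
        omega
    · -- inr x, inr y
      rcases hcase with h | h
      · have := hcast x y k hyn h
        exact LV hk4 hke2 hro hrk hr2 hxn hx1 (this ▸ hy1)
      · have := hcast y x k hxn h
        exact LV hk4 hke2 hro hrk hr2 hyn hy1 (this ▸ hx1)
  -- cardinality of S
  have hinj1 : Set.InjOn (fun x : ℕ => (Sum.inl ((x : ℕ) : ZMod n) : ZMod n ⊕ ZMod n))
      ((Finset.range n).filter (fun x => pat k r m x = 1)) := by
    intro x hx y hy hxy
    simp only [Finset.coe_filter, Set.mem_setOf_eq, Finset.mem_range] at hx hy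
    have := Sum.inl.inj hxy
    have hv := congrArg ZMod.val this
    rwa [ZMod.val_cast_of_lt hx.1, ZMod.val_cast_of_lt hy.1] at hv
  have hinj2 : Set.InjOn (fun x : ℕ => (Sum.inr ((x : ℕ) : ZMod n) : ZMod n ⊕ ZMod n))
      ((Finset.range n).filter (fun x => pat k r m x = 2)) := by
    intro x hx y hy hxy
    simp only [Finset.coe_filter, Set.mem_setOf_eq, Finset.mem_range] at hx hy
    have := Sum.inr.inj hxy
    have hv := congrArg ZMod.val this
    rwa [ZMod.val_cast_of_lt hx.1, ZMod.val_cast_of_lt hy.1] at hv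
  have hdisj : Disjoint
      (((Finset.range n).filter (fun x => pat k r m x = 1)).image
        (fun x : ℕ => (Sum.inl ((x : ℕ) : ZMod n) : ZMod n ⊕ ZMod n)))
      (((Finset.range n).filter (fun x => pat k r m x = 2)).image
        (fun x : ℕ => (Sum.inr ((x : ℕ) : ZMod n) : ZMod n ⊕ ZMod n))) := by
    rw [Finset.disjoint_left]
    intro z hz1 hz2
    simp only [Finset.mem_image] at hz1 hz2
    obtain ⟨x, -, rfl⟩ := hz1
    obtain ⟨y, -, hy⟩ := hz2
    exact Sum.inl_ne_inr (hy.symm)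
  have hcardS : S.card
      = ((Finset.range n).filter (fun x => pat k r m x = 1)).card
        + ((Finset.range n).filter (fun x => pat k r m x = 2)).card := by
    rw [hS, Finset.card_union_of_disjoint hdisj,
      Finset.card_image_of_injOn hinj1, Finset.card_image_of_injOn hinj2]
  have hsum : ((Finset.range n).filter (fun x => pat k r m x = 1)).card
        + ((Finset.range n).filter (fun x => pat k r m x = 2)).card
      = ((Finset.range n).filter (fun x => pat k r m x ≠ 0)).card := by
    have hcg : ∀ x ∈ Finset.range n,
        (pat k r m x ≠ 0) ↔ (pat k r m x = 1 ∨ pat k r m x = 2) := by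
      intro x _
      have := pat_le k r m x
      omega
    rw [Finset.filter_congr hcg, Finset.filter_or,
      Finset.card_union_of_disjoint]
    rw [Finset.disjoint_left]
    intro z hz1 hz2
    simp only [Finset.mem_filter] at hz1 hz2
    omega
  have hcardTot : ((Finset.range n).filter (fun x => pat k r m x ≠ 0)).card
      = q' * (2*k-1) + ((Finset.range (2*k + r)).filter (fun y => patF k r y ≠ 0)).card :=
    card_total hk4
  -- alpha lower bound
  have hmemS : S.card ∈ {mm | ∃ s : Finset (ZMod n ⊕ ZMod n), IsIndep (P n k) s ∧ s.card = mm} :=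
    ⟨S, hindep, rfl⟩
  have hbdd : BddAbove {mm | ∃ s : Finset (ZMod n ⊕ ZMod n), IsIndep (P n k) s ∧ s.card = mm} := by
    refine ⟨Fintype.card (ZMod n ⊕ ZMod n), ?_⟩
    rintro mm ⟨s, -, rfl⟩
    exact (Finset.card_le_univ s).trans (le_of_eq (Finset.card_univ))
  have halpha : S.card ≤ alpha n k := le_csSup hbdd hmemS
  -- final arithmetic
  rw [hq']
  have hcast2 : ((q' * (2*k-1) : ℕ) : ℤ) = (q' : ℤ) * (2*(k:ℤ) - 1) := by
    have h1 : ((2*k-1 : ℕ) : ℤ) = 2*(k:ℤ) - 1 := by omega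
    rw [Nat.cast_mul, h1]
  have hkaZ : (k : ℤ) = 2*(a:ℤ) := by exact_mod_cast congrArg (Nat.cast : ℕ → ℤ) ha
  have halphaZ : (S.card : ℤ) ≤ (alpha n k : ℤ) := by exact_mod_cast halpha
  rcases lt_trichotomy r k with hrlt | hreq | hrgt
  · rcases Nat.lt_or_ge 1 r with hr1 | hr1
    · -- 1 < r < k
      obtain ⟨b, hb⟩ : ∃ b, r = 2*b+1 := ⟨r/2, by omega⟩
      have hcF := cardF2 hk4 hke2 hro hrk hr2 ha hb (by omega) (by omega)
      have hcv : c = 3*(b:ℤ) + 1 - (a:ℤ) := by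
        rw [hc2 hr1 hrlt]
        have : (r : ℤ) = 2*(b:ℤ)+1 := by exact_mod_cast congrArg (Nat.cast : ℕ → ℤ) hb
        rw [this, hkaZ]
        omega
      have hcardZ : (S.card : ℤ) = (q' : ℤ) * (2*(k:ℤ) - 1) + (3*(a:ℤ) + 3*(b:ℤ)) := by
        rw [hcardS, hsum, hcardTot, hcF, Nat.cast_add, hcast2]
        push_cast
        ring
      have hfin : (2 * (k:ℤ) - 1) * ((q':ℤ) + 1) + (3*(b:ℤ) + 1 - (a:ℤ)) = (S.card : ℤ) := by
        rw [hcardZ, hkaZ]; push_cast; ring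
      rw [hcv]
      push_cast
      linarith [halphaZ, hfin]
    · -- r = 1
      have hr1' : r = 1 := by omega
      have hcF := cardF1 hk4 hke2 hro hrk hr2 ha hr1'
      have hcv : c = 2 - (a:ℤ) := by
        rw [hc1 hr1', hkaZ]; omega
      have hcardZ : (S.card : ℤ) = (q' : ℤ) * (2*(k:ℤ) - 1) + (3*(a:ℤ) + 1) := by
        rw [hcardS, hsum, hcardTot, hcF, Nat.cast_add, hcast2]
        push_cast
        ring
      have hfin : (2 * (k:ℤ) - 1) * ((q':ℤ) + 1) + (2 - (a:ℤ)) = (S.card : ℤ) := by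
        rw [hcardZ, hkaZ]; push_cast; ring
      rw [hcv]
      push_cast
      linarith [halphaZ, hfin]
  · exact absurd hreq hrk
  · -- k < r
    obtain ⟨s, hs⟩ : ∃ s, r = 2*a + 1 + 2*s := ⟨(r - k - 1)/2, by omega⟩
    have hcF := cardF3 hk4 hke2 hro hrk hr2 ha hs (by omega)
    have hcv : c = 2*(a:ℤ) + (s:ℤ) := by
      rw [hc3 hrgt]
      have : (r : ℤ) = 2*(a:ℤ)+1+2*(s:ℤ) := by exact_mod_cast congrArg (Nat.cast : ℕ → ℤ) hs
      rw [this, hkaZ]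
      omega
    have hcardZ : (S.card : ℤ) = (q' : ℤ) * (2*(k:ℤ) - 1) + (6*(a:ℤ) - 1 + (s:ℤ)) := by
      have h6 : 6*a - 1 + s = 6*a + s - 1 := by omega
      have h61 : ((6*a + s - 1 : ℕ) : ℤ) = 6*(a:ℤ) + (s:ℤ) - 1 := by omega
      rw [hcardS, hsum, hcardTot, hcF, h6, Nat.cast_add, hcast2, h61]
      ring
    have hfin : (2 * (k:ℤ) - 1) * ((q':ℤ) + 1) + (2*(a:ℤ) + (s:ℤ)) = (S.card : ℤ) := by
      rw [hcardZ, hkaZ]; push_cast; ring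
    rw [hcv]
    push_cast
    linarith [halphaZ, hfin]


end GP
end
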